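/- arXiv:2109.01360 — 7 statements merged into one kernel-verified Lean document; each statement's English description precedes it below -/
import Mathlib

section
/- If a Banach lattice E has the unbounded Grothendieck property (every norm bounded sequence in E' that is unbounded weak* null is weakly null), then E has the disjoint Grothendieck property (every norm bounded pairwise disjoint sequence in E' is weakly null). -/
open Filter Topology NormedSpace

section Defs
variable (E : Type*) [NormedAddCommGroup E] [NormedSpace ℝ E] [Lattice (StrongDual ℝ E)]

/-- A sequence in the dual is weak* null. -/
def WeakStarNull (x' : ℕ → StrongDual ℝ E) : Prop :=
  ∀ v : E, Tendsto (fun n => x' n v) atTop (𝓝 0)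

/-- A sequence in the dual is weakly null (null for the weak topology of `E'`). -/
def WeaklyNullDual (x' : ℕ → StrongDual ℝ E) : Prop :=
  ∀ F : StrongDual ℝ (StrongDual ℝ E), Tendsto (fun n => F (x' n)) atTop (𝓝 0)

/-- A sequence in the dual is unbounded weak* null: `|xₙ'| ⊓ u' → 0` weak* for every `0 ≤ u'`. -/
def UawStarNull (x' : ℕ → StrongDual ℝ E) : Prop :=
  ∀ u' : StrongDual ℝ E, 0 ≤ u' → ∀ v : E, Tendsto (fun n => (|x' n| ⊓ u') v) atTop (𝓝 0)

/-- The unbounded Grothendieck property. -/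
def HasUGP : Prop :=
  ∀ x' : ℕ → StrongDual ℝ E, (∃ C, ∀ n, ‖x' n‖ ≤ C) → UawStarNull E x' → WeaklyNullDual E x'

/-- The disjoint Grothendieck property. -/
def HasDGP : Prop :=
  ∀ x' : ℕ → StrongDual ℝ E, (∃ C, ∀ n, ‖x' n‖ ≤ C) →
    (Pairwise fun m n => |x' m| ⊓ |x' n| = 0) → WeaklyNullDual E x'

/-- The weak Grothendieck property. -/
def HasWGP : Prop :=
  ∀ x' : ℕ → StrongDual ℝ E, (Pairwise fun m n => |x' m| ⊓ |x' n| = 0) →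
    WeakStarNull E x' → WeaklyNullDual E x'

/-- The Grothendieck property. -/
def HasGP : Prop :=
  ∀ x' : ℕ → StrongDual ℝ E, WeakStarNull E x' → WeaklyNullDual E x'

/-- The positive Grothendieck property. -/
def HasPGP : Prop :=
  ∀ x' : ℕ → StrongDual ℝ E, (∀ n, 0 ≤ x' n) → WeakStarNull E x' → WeaklyNullDual E x'

/-- The norm is order continuous: any downward directed set with infimum `0`
contains elements of arbitrarily small norm. -/
def HasOrderContinuousNorm (X : Type*) [NormedAddCommGroup X] [Lattice X] : Prop :=
  ∀ A : Set X, A.Nonempty → DirectedOn (· ≥ ·) A → IsGLB A 0 →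
    ∀ ε : ℝ, 0 < ε → ∃ a ∈ A, ‖a‖ < ε

/-- σ-order completeness: every nonempty countable order bounded set has a supremum. -/
def SigmaOrderComplete (X : Type*) [Lattice X] : Prop :=
  ∀ A : Set X, A.Countable → A.Nonempty → BddAbove A → ∃ s, IsLUB A s

end Defs


variable {E : Type*} [NormedAddCommGroup E] [Lattice E] [IsOrderedAddMonoid E] [HasSolidNorm E] [NormedSpace ℝ E] [CompleteSpace E]
  [Lattice (StrongDual ℝ E)]

set_option linter.unusedSectionVars false
section Helpers
variable {E : Type*} [NormedAddCommGroup E] [Lattice E] [IsOrderedAddMonoid E] [HasSolidNorm E] [NormedSpace ℝ E] [CompleteSpace E]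
  [Lattice (StrongDual ℝ E)]
variable (hord : ∀ f g : StrongDual ℝ E, f ≤ g ↔ ∀ x : E, 0 ≤ x → f x ≤ g x)
include hord

lemma aux_add_le_add_iff (a b c : StrongDual ℝ E) : a + c ≤ b + c ↔ a ≤ b := by
  rw [hord, hord]
  refine ⟨fun H x hx => ?_, fun H x hx => ?_⟩
  · have := H x hx; simp only [ContinuousLinearMap.add_apply] at this; linarith
  · simp only [ContinuousLinearMap.add_apply]; linarith [H x hx]

lemma aux_neg_le_neg_iff (a b : StrongDual ℝ E) : -b ≤ -a ↔ a ≤ b := by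
  rw [hord, hord]
  refine ⟨fun H x hx => ?_, fun H x hx => ?_⟩
  · have := H x hx; simp only [ContinuousLinearMap.neg_apply] at this; linarith
  · simp only [ContinuousLinearMap.neg_apply]; linarith [H x hx]

lemma aux_add_inf (a b c : StrongDual ℝ E) : c + (a ⊓ b) = (c + a) ⊓ (c + b) := by
  apply le_antisymm
  · refine le_inf ?_ ?_
    · have := (aux_add_le_add_iff hord (a ⊓ b) a c).mpr inf_le_left
      calc c + a ⊓ b = a ⊓ b + c := by abel
      _ ≤ a + c := this
      _ = c + a := by abel
    · have := (aux_add_le_add_iff hord (a ⊓ b) b c).mpr inf_le_right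
      calc c + a ⊓ b = a ⊓ b + c := by abel
      _ ≤ b + c := this
      _ = c + b := by abel
  · have h1 : (c + a) ⊓ (c + b) - c ≤ a := by
      rw [← aux_add_le_add_iff hord _ _ c]
      calc (c + a) ⊓ (c + b) - c + c = (c + a) ⊓ (c + b) := by abel
      _ ≤ c + a := inf_le_left
      _ = a + c := by abel
    have h2 : (c + a) ⊓ (c + b) - c ≤ b := by
      rw [← aux_add_le_add_iff hord _ _ c]
      calc (c + a) ⊓ (c + b) - c + c = (c + a) ⊓ (c + b) := by abel
      _ ≤ c + b := inf_le_right
      _ = b + c := by abel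
    have h3 := le_inf h1 h2
    rw [← aux_add_le_add_iff hord _ _ c] at h3
    calc (c + a) ⊓ (c + b) = (c + a) ⊓ (c + b) - c + c := by abel
    _ ≤ a ⊓ b + c := h3
    _ = c + a ⊓ b := by abel

lemma aux_neg_inf (a b : StrongDual ℝ E) : -(a ⊓ b) = (-a) ⊔ (-b) := by
  apply le_antisymm
  · rw [← aux_neg_le_neg_iff hord, neg_neg]
    exact le_inf (by rw [← aux_neg_le_neg_iff hord, neg_neg]; exact le_sup_left)
      (by rw [← aux_neg_le_neg_iff hord, neg_neg]; exact le_sup_right)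
  · exact sup_le ((aux_neg_le_neg_iff hord _ _).mpr inf_le_left)
      ((aux_neg_le_neg_iff hord _ _).mpr inf_le_right)

lemma aux_sup_add_inf (a b : StrongDual ℝ E) : a ⊔ b = a + b - a ⊓ b := by
  have h1 : (-a) ⊓ (-b) = -(a + b) + (b ⊓ a) := by
    have := aux_add_inf hord b a (-(a + b))
    rw [this]; congr 1 <;> abel
  have h2 : a ⊔ b = -((-a) ⊓ (-b)) := by
    rw [aux_neg_inf hord, neg_neg, neg_neg]
  rw [h2, h1, inf_comm b a]; abel

lemma aux_abs_nonneg (a : StrongDual ℝ E) : 0 ≤ |a| := by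
  have h1 : a ≤ a ⊔ -a := le_sup_left
  have h2 : -a ≤ a ⊔ -a := le_sup_right
  show (0 : StrongDual ℝ E) ≤ a ⊔ -a
  rw [hord] at h1 h2 ⊢
  intro x hx
  have e1 := h1 x hx; have e2 := h2 x hx
  simp only [ContinuousLinearMap.neg_apply] at e2
  simp only [ContinuousLinearMap.zero_apply]
  linarith

lemma aux_disj_inf_zero (a b c : StrongDual ℝ E) (ha : 0 ≤ a) (hb : 0 ≤ b) (hc : 0 ≤ c)
    (hac : a ⊓ c = 0) (hbc : b ⊓ c = 0) : (a + b) ⊓ c = 0 := by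
  have hcac : c ≤ a + c := by
    rw [hord] at ha ⊢
    intro x hx
    simp only [ContinuousLinearMap.add_apply]
    have := ha x hx; simp only [ContinuousLinearMap.zero_apply] at this; linarith
  have h1 : (a + b) ⊓ c ≤ (a + b) ⊓ (a + c) := inf_le_inf_left _ hcac
  rw [← aux_add_inf hord, hbc, add_zero] at h1
  have h2 : (a + b) ⊓ c ≤ a ⊓ c := le_inf h1 inf_le_right
  rw [hac] at h2
  refine le_antisymm h2 (le_inf ?_ hc)
  rw [hord] at ha hb ⊢
  intro x hx
  have := ha x hx; have := hb x hx
  simp only [ContinuousLinearMap.zero_apply, ContinuousLinearMap.add_apply] at *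
  linarith

lemma aux_disj_add_le (a b u : StrongDual ℝ E) (hab : a ⊓ b = 0) (ha : a ≤ u) (hb : b ≤ u) :
    a + b ≤ u := by
  have := aux_sup_add_inf hord a b
  rw [hab, sub_zero] at this
  rw [← this]
  exact sup_le ha hb
end Helpers

section Main
variable {E : Type*} [NormedAddCommGroup E] [Lattice E] [IsOrderedAddMonoid E] [HasSolidNorm E] [NormedSpace ℝ E] [CompleteSpace E]
  [Lattice (StrongDual ℝ E)]
variable (hord : ∀ f g : StrongDual ℝ E, f ≤ g ↔ ∀ x : E, 0 ≤ x → f x ≤ g x)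
include hord

lemma aux_sum_nonneg (y : ℕ → StrongDual ℝ E) (hy0 : ∀ n, 0 ≤ y n) (F : Finset ℕ) :
    0 ≤ ∑ n ∈ F, y n := by
  rw [hord]
  intro x hx
  simp only [ContinuousLinearMap.zero_apply, ContinuousLinearMap.sum_apply]
  exact Finset.sum_nonneg fun n _ => by
    have := (hord 0 (y n)).mp (hy0 n) x hx; simpa using this

lemma aux_sum_disj (y : ℕ → StrongDual ℝ E) (hy0 : ∀ n, 0 ≤ y n)
    (hdisj : ∀ m n, m ≠ n → y m ⊓ y n = 0) (a : ℕ) (F : Finset ℕ) :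
    a ∉ F → (∑ n ∈ F, y n) ⊓ y a = 0 := by
  induction F using Finset.induction_on with
  | empty =>
    intro _
    simp only [Finset.sum_empty]
    refine le_antisymm inf_le_left (le_inf le_rfl (hy0 a))
  | @insert b F' hb ih =>
    intro ha
    rw [Finset.sum_insert hb]
    refine aux_disj_inf_zero hord _ _ _ (hy0 b) (aux_sum_nonneg hord y hy0 F') (hy0 a)
      (hdisj b a (by rintro rfl; exact ha (Finset.mem_insert_self _ _)))
      (ih (fun h => ha (Finset.mem_insert_of_mem h)))

lemma aux_sum_le (y : ℕ → StrongDual ℝ E) (u : StrongDual ℝ E) (hy0 : ∀ n, 0 ≤ y n)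
    (hyu : ∀ n, y n ≤ u) (hdisj : ∀ m n, m ≠ n → y m ⊓ y n = 0) (hu : 0 ≤ u)
    (F : Finset ℕ) : ∑ n ∈ F, y n ≤ u := by
  induction F using Finset.induction_on with
  | empty => simpa using hu
  | @insert b F' hb ih =>
    rw [Finset.sum_insert hb]
    have hd : y b ⊓ ∑ n ∈ F', y n = 0 := by
      rw [inf_comm]; exact aux_sum_disj hord y hy0 hdisj b F' hb
    exact aux_disj_add_le hord _ _ _ hd (hyu b) ih
end Main

/-- UGP implies DGP. -/

theorem ugp_implies_dgp (hord : ∀ f g : StrongDual ℝ E, f ≤ g ↔ ∀ x : E, 0 ≤ x → f x ≤ g x) (h : HasUGP E) : HasDGP E := by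
  intro x' hbd hdisj
  unfold HasUGP at h
  apply h x' hbd
  intro u' hu' v
  set y : ℕ → StrongDual ℝ E := fun n => |x' n| ⊓ u' with hy
  have hy0 : ∀ n, 0 ≤ y n := fun n => le_inf (aux_abs_nonneg hord _) hu'
  have hyu : ∀ n, y n ≤ u' := fun n => inf_le_right
  have hd : ∀ m n, m ≠ n → y m ⊓ y n = 0 := by
    intro m n hmn
    refine le_antisymm ?_ (le_inf (hy0 m) (hy0 n))
    calc y m ⊓ y n ≤ |x' m| ⊓ |x' n| := inf_le_inf inf_le_left inf_le_left
    _ = 0 := hdisj hmn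
  have key : ∀ w : E, 0 ≤ w → Tendsto (fun n => y n w) atTop (𝓝 0) := by
    intro w hw
    have hsum : ∀ N : ℕ, ∑ n ∈ Finset.range N, y n w ≤ u' w := by
      intro N
      have := (hord _ _).mp (aux_sum_le hord y u' hy0 hyu hd hu' (Finset.range N)) w hw
      simpa [ContinuousLinearMap.sum_apply] using this
    have hnn : ∀ n, 0 ≤ y n w := fun n => by
      have := (hord 0 (y n)).mp (hy0 n) w hw; simpa using this
    exact (summable_of_sum_range_le hnn hsum).tendsto_atTop_zero
  have hv : ∀ n, y n v = y n (v⁺) - y n (v⁻) := by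
    intro n
    rw [← map_sub]
    congr 1
    exact (posPart_sub_negPart v).symm
  refine Tendsto.congr (fun n => (hv n).symm) ?_
  have := (key _ (posPart_nonneg v)).sub (key _ (negPart_nonneg v))
  simpa using this
end

section
/- Every norm bounded pairwise disjoint sequence in a Banach lattice is unbounded absolutely weakly null, i.e., |x_n| ∧ u → 0 weakly for each positive u. -/
open Filter Topology NormedSpace

variable {E : Type*} [NormedAddCommGroup E] [Lattice E] [IsOrderedAddMonoid E] [HasSolidNorm E] [NormedSpace ℝ E] [CompleteSpace E]
  [Lattice (StrongDual ℝ E)]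

section Aux
variable {X : Type*} [NormedAddCommGroup X] [Lattice X] [IsOrderedAddMonoid X]

lemma aux_inf_add_le {a b c : X} (ha : 0 ≤ a) (hb : 0 ≤ b) (hc : 0 ≤ c) :
    a ⊓ (b + c) ≤ a ⊓ b + a ⊓ c := by
  have h : a ⊓ b + a ⊓ c = (a ⊓ b + a) ⊓ (a ⊓ b + c) := add_inf _ _ _
  rw [h, inf_add, inf_add]
  refine le_inf (le_inf ?_ ?_) (le_inf ?_ ?_)
  · exact le_trans inf_le_left (le_add_of_nonneg_left ha)
  · exact le_trans inf_le_left (le_add_of_nonneg_left hb)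
  · exact le_trans inf_le_left (le_add_of_nonneg_right hc)
  · exact inf_le_right

lemma aux_abs_sum_le {ι : Type*} (s : Finset ι) (g : ι → X) :
    |∑ n ∈ s, g n| ≤ ∑ n ∈ s, |g n| := by
  classical
  induction s using Finset.induction with
  | empty => simp
  | @insert b t hbt ih =>
    rw [Finset.sum_insert hbt, Finset.sum_insert hbt]
    exact (abs_add_le (g b) (∑ n ∈ t, g n)).trans (add_le_add_right ih _)

lemma aux_inf_sum {ι : Type*} (s : Finset ι) (y : ι → X) (a : X)
    (hy : ∀ n, 0 ≤ y n) (ha : 0 ≤ a) (hdisj : ∀ n ∈ s, a ⊓ y n = 0) :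
    a ⊓ (∑ n ∈ s, y n) = 0 := by
  classical
  induction s using Finset.induction with
  | empty => simp [inf_eq_right.mpr ha]
  | @insert b t hbt ih =>
    rw [Finset.sum_insert hbt]
    have hsum : (0:X) ≤ ∑ n ∈ t, y n := Finset.sum_nonneg fun n _ => hy n
    have h1 : a ⊓ (y b + ∑ n ∈ t, y n) ≤ a ⊓ y b + a ⊓ ∑ n ∈ t, y n :=
      aux_inf_add_le ha (hy b) hsum
    rw [hdisj b (Finset.mem_insert_self b t),
        ih (fun n hn => hdisj n (Finset.mem_insert_of_mem hn)), add_zero] at h1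
    exact le_antisymm h1 (le_inf ha (add_nonneg (hy b) hsum))

lemma aux_sum_le_s2 {ι : Type*} (s : Finset ι) (y : ι → X) (u : X)
    (hu0 : 0 ≤ u) (hy : ∀ n, 0 ≤ y n) (hu : ∀ n, y n ≤ u)
    (hdisj : ∀ m ∈ s, ∀ n ∈ s, m ≠ n → y m ⊓ y n = 0) :
    ∑ n ∈ s, y n ≤ u := by
  classical
  induction s using Finset.induction with
  | empty => simpa using hu0
  | @insert b t hbt ih =>
    rw [Finset.sum_insert hbt]
    have hsum : ∑ n ∈ t, y n ≤ u :=
      ih fun m hm n hn hmn =>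
        hdisj m (Finset.mem_insert_of_mem hm) n (Finset.mem_insert_of_mem hn) hmn
    have hzero : y b ⊓ (∑ n ∈ t, y n) = 0 :=
      aux_inf_sum t y (y b) hy (hy b) fun n hn =>
        hdisj b (Finset.mem_insert_self b t) n (Finset.mem_insert_of_mem hn)
        (fun h => hbt (h ▸ hn))
    have : y b + ∑ n ∈ t, y n = y b ⊔ ∑ n ∈ t, y n := by
      rw [← inf_add_sup (y b) (∑ n ∈ t, y n), hzero, zero_add]
    rw [this]
    exact sup_le (hu b) hsum
end Aux

/-- Every norm bounded pairwise disjoint sequence in a Banach lattice is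
unbounded absolutely weakly null: `|xₙ| ⊓ u → 0` weakly for every `0 ≤ u`. -/
theorem bounded_disjoint_uaw_null (x : ℕ → E) (hb : ∃ C, ∀ n, ‖x n‖ ≤ C)
    (hd : Pairwise fun m n => |x m| ⊓ |x n| = 0) :
    ∀ u : E, 0 ≤ u → ∀ f : StrongDual ℝ E, Tendsto (fun n => f (|x n| ⊓ u)) atTop (𝓝 0) := by
  intro u hu f
  classical
  set y : ℕ → E := fun n => |x n| ⊓ u with hy
  have hy0 : ∀ n, 0 ≤ y n := fun n => le_inf (abs_nonneg _) hu
  have hyu : ∀ n, y n ≤ u := fun n => inf_le_right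
  have hyd : ∀ m n, m ≠ n → y m ⊓ y n = 0 := by
    intro m n hmn
    refine le_antisymm ?_ (le_inf (hy0 m) (hy0 n))
    calc y m ⊓ y n ≤ |x m| ⊓ |x n| := inf_le_inf inf_le_left inf_le_left
      _ = 0 := hd hmn
  set z : ℕ → E := fun n => if 0 ≤ f (y n) then y n else -y n with hz
  have habs : ∀ n, |z n| = y n := by
    intro n
    simp only [hz]
    split
    · exact abs_of_nonneg (hy0 n)
    · rw [abs_neg]; exact abs_of_nonneg (hy0 n)
  have hfz : ∀ n, f (z n) = |f (y n)| := by
    intro n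
    simp only [hz]
    split
    · rename_i h; rw [abs_of_nonneg h]
    · rename_i h; rw [map_neg, abs_of_neg (lt_of_not_ge h)]
  have key : ∀ s : Finset ℕ, ∑ n ∈ s, |f (y n)| ≤ ‖f‖ * ‖u‖ := by
    intro s
    have heq : ∑ n ∈ s, |f (y n)| = f (∑ n ∈ s, z n) := by
      rw [map_sum]
      exact Finset.sum_congr rfl fun n _ => (hfz n).symm
    rw [heq]
    have h1 : |∑ n ∈ s, z n| ≤ u := by
      calc |∑ n ∈ s, z n| ≤ ∑ n ∈ s, |z n| := aux_abs_sum_le s z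
        _ = ∑ n ∈ s, y n := Finset.sum_congr rfl fun n _ => habs n
        _ ≤ u := aux_sum_le_s2 s y u hu hy0 hyu fun m _ n _ h => hyd m n h
    have h2 : ‖∑ n ∈ s, z n‖ ≤ ‖u‖ := by
      apply HasSolidNorm.solid
      rwa [abs_of_nonneg hu]
    calc f (∑ n ∈ s, z n) ≤ ‖f (∑ n ∈ s, z n)‖ := le_abs_self _
      _ ≤ ‖f‖ * ‖∑ n ∈ s, z n‖ := f.le_opNorm _
      _ ≤ ‖f‖ * ‖u‖ := mul_le_mul_of_nonneg_left h2 (norm_nonneg f)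
  have hsummable : Summable fun n => |f (y n)| :=
    summable_of_sum_le (fun n => abs_nonneg _) key
  have h0 : Tendsto (fun n => |f (y n)|) atTop (𝓝 0) :=
    hsummable.tendsto_atTop_zero
  exact (tendsto_zero_iff_abs_tendsto_zero _).mpr h0
end

section
/- The Banach lattice ℓ∞ does not have the unbounded Grothendieck property: the standard unit vector basis (e_n), viewed as a sequence in the dual of ℓ∞ via the embedding ℓ¹ ⊆ (ℓ∞)', is unbounded weak* null but not weakly null. -/
open Filter Topology NormedSpace

open ENNReal

/-- ℓ∞ -/
noncomputable abbrev Linf : Type := lp (fun _ : ℕ => ℝ) ∞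

noncomputable def mkL (f : ℕ → ℝ) (C : ℝ) (h : ∀ i, ‖f i‖ ≤ C) : Linf :=
  ⟨f, memℓp_infty ⟨C, by rintro r ⟨i, rfl⟩; exact h i⟩⟩

@[simp] lemma mkL_apply (f : ℕ → ℝ) (C : ℝ) (h : ∀ i, ‖f i‖ ≤ C) (i : ℕ) :
    (mkL f C h) i = f i := rfl

noncomputable def delta (n : ℕ) : Linf :=
  mkL (fun i => if i = n then 1 else 0) 1 (by intro i; dsimp; split <;> norm_num)

@[simp] lemma delta_apply (n i : ℕ) : (delta n) i = if i = n then 1 else 0 := rfl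

noncomputable def ev (n : ℕ) : StrongDual ℝ Linf :=
  LinearMap.mkContinuous
    { toFun := fun x => x n
      map_add' := fun x y => by simp [lp.coeFn_add]
      map_smul' := fun c x => by simp [lp.coeFn_smul] }
    1 (fun x => by rw [one_mul]; exact lp.norm_apply_le_norm (by norm_num) x n)

@[simp] lemma ev_apply (n : ℕ) (x : Linf) : ev n x = x n := rfl

lemma ev_norm (n : ℕ) : ‖ev n‖ ≤ 1 :=
  LinearMap.mkContinuous_norm_le _ zero_le_one _

section main
variable [Lattice (StrongDual ℝ Linf)]
variable (hord : ∀ f g : StrongDual ℝ Linf, f ≤ g ↔ ∀ x : Linf, (∀ i, 0 ≤ x i) → f x ≤ g x)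
include hord

lemma pos_apply {h : StrongDual ℝ Linf} (h0 : 0 ≤ h) {x : Linf} (hx : ∀ i, 0 ≤ x i) :
    0 ≤ h x := by
  simpa using (hord 0 h).mp h0 x hx

lemma ev_pos (n : ℕ) : (0 : StrongDual ℝ Linf) ≤ ev n := by
  rw [hord]; intro x hx; simpa using hx n

lemma abs_ev (n : ℕ) : |ev n| = ev n := by
  show ev n ⊔ -ev n = ev n
  rw [sup_eq_left, hord]
  intro x hx
  have := hx n
  simp only [ContinuousLinearMap.neg_apply, ev_apply]
  linarith

/-- Key: a positive functional dominated by `ev n` is a multiple of evaluation at `n`. -/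
lemma dom_ev_apply {h : StrongDual ℝ Linf} (h0 : 0 ≤ h) {n : ℕ} (hle : h ≤ ev n) (v : Linf) :
    h v = v n * h (delta n) := by
  set w : Linf := v - v n • delta n with hw
  have hwcoord : ∀ i, w i = v i - v n * (if i = n then 1 else 0) := by
    intro i; rw [hw, lp.coeFn_sub]
    show v i - (v n • delta n : Linf) i = _
    rw [lp.coeFn_smul]; rfl
  have hwn : w n = 0 := by simp [hwcoord n]
  have hbd : ∀ i, ‖max (w i) 0‖ ≤ ‖w‖ ∧ ‖max (-w i) 0‖ ≤ ‖w‖ := by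
    intro i
    have h1 := abs_le.mp (Real.norm_eq_abs (w i) ▸
      lp.norm_apply_le_norm (E := fun _ : ℕ => ℝ) (p := ∞) (by norm_num) w i)
    have h2 : (0:ℝ) ≤ ‖w‖ := norm_nonneg w
    constructor <;> rw [Real.norm_eq_abs, abs_le] <;>
      exact ⟨le_trans (by linarith) (le_max_right _ _), max_le (by linarith) h2⟩
  set wp : Linf := mkL (fun i => max (w i) 0) ‖w‖ (fun i => (hbd i).1) with hwp
  set wm : Linf := mkL (fun i => max (-w i) 0) ‖w‖ (fun i => (hbd i).2) with hwm
  have hsplit : w = wp - wm := by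
    apply Subtype.ext; funext i
    show w i = (wp - wm : Linf) i
    rw [lp.coeFn_sub]
    show w i = max (w i) 0 - max (-w i) 0
    rcases le_total (w i) 0 with hc | hc
    · rw [max_eq_right hc, max_eq_left (by linarith)]; ring
    · rw [max_eq_left hc, max_eq_right (by linarith)]; ring
  have hzero : ∀ (z : Linf), (∀ i, 0 ≤ z i) → z n = 0 → h z = 0 := by
    intro z hz hzn
    have h1 : 0 ≤ h z := pos_apply hord h0 hz
    have h2 : h z ≤ ev n z := (hord h (ev n)).mp hle z hz
    rw [ev_apply, hzn] at h2
    linarith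
  have hwp0 : h wp = 0 := hzero wp (fun i => le_max_right _ _) (by
    show max (w n) 0 = 0; rw [hwn]; simp)
  have hwm0 : h wm = 0 := hzero wm (fun i => le_max_right _ _) (by
    show max (-w n) 0 = 0; rw [hwn]; simp)
  have hW : h w = 0 := by rw [hsplit, map_sub, hwp0, hwm0]; ring
  have hv : v = w + v n • delta n := by rw [hw]; abel
  calc h v = h (w + v n • delta n) := by rw [← hv]
    _ = h w + v n • h (delta n) := by rw [map_add, map_smul]
    _ = v n * h (delta n) := by rw [hW, zero_add, smul_eq_mul]

/-- coordinates of a positive `u'` at the unit vectors tend to zero. -/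
lemma delta_tendsto {u' : StrongDual ℝ Linf} (hu : 0 ≤ u') :
    Tendsto (fun n => u' (delta n)) atTop (𝓝 0) := by
  have hpos : ∀ n, 0 ≤ u' (delta n) := fun n =>
    pos_apply hord hu (fun i => by dsimp; split <;> norm_num)
  have hS : ∀ N j, ((∑ i ∈ Finset.range N, delta i : Linf) : ℕ → ℝ) j
      = if j ∈ Finset.range N then 1 else 0 := by
    intro N j
    rw [lp.coeFn_sum]
    show (∑ i ∈ Finset.range N, (delta i : ℕ → ℝ)) j = _
    rw [Finset.sum_apply]
    simp only [delta_apply]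
    rw [Finset.sum_ite_eq (Finset.range N) j (fun _ => (1:ℝ))]
  have hsum : ∀ N, ∑ i ∈ Finset.range N, u' (delta i) ≤ u' 1 := by
    intro N
    rw [← map_sum u' delta (Finset.range N)]
    have hc : ∀ j, (0:ℝ) ≤ ((1 - ∑ i ∈ Finset.range N, delta i : Linf) : ℕ → ℝ) j := by
      intro j
      rw [lp.coeFn_sub]
      show (0:ℝ) ≤ (1 : Linf) j - _
      rw [hS]
      have : ((1 : Linf) : ℕ → ℝ) j = 1 := rfl
      rw [this]; split <;> norm_num
    have := pos_apply hord hu hc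
    rw [map_sub] at this
    linarith
  have : Summable (fun n => u' (delta n)) :=
    summable_of_sum_range_le hpos hsum
  exact this.tendsto_atTop_zero
end main


/-- ℓ∞ does not have the unbounded Grothendieck property: the standard unit vectors
of ℓ¹ ⊆ (ℓ∞)', i.e. the coordinate evaluations, form a norm bounded unbounded weak* null
sequence which is not weakly null. -/
theorem linf_not_ugp [Lattice (StrongDual ℝ Linf)]
    (hord : ∀ f g : StrongDual ℝ Linf, f ≤ g ↔ ∀ x : Linf, (∀ i, 0 ≤ x i) → f x ≤ g x) :
    ¬ HasUGP Linf ∧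
    ∃ e' : ℕ → StrongDual ℝ Linf, (∀ n (x : Linf), e' n x = x n) ∧
      (∃ C, ∀ n, ‖e' n‖ ≤ C) ∧ UawStarNull Linf e' ∧ ¬ WeaklyNullDual Linf e' := by
  have hbd : ∃ C, ∀ n, ‖ev n‖ ≤ C := ⟨1, ev_norm⟩
  have huaw : UawStarNull Linf ev := by
    intro u' hu v
    have key : ∀ n, (|ev n| ⊓ u') v = v n * ((ev n ⊓ u') (delta n)) := by
      intro n
      rw [abs_ev hord n]
      exact dom_ev_apply hord (le_inf (ev_pos hord n) hu) inf_le_left v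
    have hb : ∀ n, ‖(|ev n| ⊓ u') v‖ ≤ ‖v‖ * u' (delta n) := by
      intro n
      rw [key n, Real.norm_eq_abs, abs_mul]
      have h1 : |v n| ≤ ‖v‖ := by
        rw [← Real.norm_eq_abs]
        exact lp.norm_apply_le_norm (by norm_num) v n
      have hdn : ∀ i, (0:ℝ) ≤ (delta n) i := fun i => by dsimp; split <;> norm_num
      have h2 : 0 ≤ (ev n ⊓ u') (delta n) :=
        pos_apply hord (le_inf (ev_pos hord n) hu) hdn
      have h3 : (ev n ⊓ u') (delta n) ≤ u' (delta n) :=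
        (hord _ _).mp inf_le_right (delta n) hdn
      rw [abs_of_nonneg h2]
      exact mul_le_mul h1 h3 h2 (norm_nonneg v)
    have hlim : Tendsto (fun n => ‖v‖ * u' (delta n)) atTop (𝓝 0) := by
      have := (delta_tendsto hord hu).const_mul ‖v‖
      rwa [mul_zero] at this
    exact squeeze_zero_norm hb hlim
  have hnw : ¬ WeaklyNullDual Linf ev := by
    intro H
    have hT := H (inclusionInDoubleDual ℝ Linf 1)
    have h1 : ∀ n, (inclusionInDoubleDual ℝ Linf 1) (ev n) = 1 := fun n => rfl
    have hc : Tendsto (fun _ : ℕ => (1:ℝ)) atTop (𝓝 0) := by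
      simp only [h1] at hT; exact hT
    exact zero_ne_one (tendsto_nhds_unique hc tendsto_const_nhds)
  exact ⟨fun H => hnw (H ev hbd huaw), ev, fun n x => rfl, hbd, huaw, hnw⟩
end

section
/- The Banach lattice ℓ∞ does not have the disjoint Grothendieck property: the sequence u_n in ℓ¹ ⊆ (ℓ∞)' given by u_n = e_{2n} + e_{2n+1} is norm bounded and pairwise disjoint but not weakly null in (ℓ∞)'. -/
set_option maxHeartbeats 1000000
set_option synthInstance.maxHeartbeats 400000


open Filter Topology NormedSpace

open ENNReal

section Aux

/-- evaluation functional on ℓ∞ -/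
noncomputable def linfEv (i : ℕ) : StrongDual ℝ Linf :=
  LinearMap.mkContinuous
    { toFun := fun x => x i
      map_add' := fun x y => by simp [lp.coeFn_add]
      map_smul' := fun c x => by simp [lp.coeFn_smul] }
    1 (fun x => by
      rw [one_mul]; exact lp.norm_apply_le_norm (E := fun _ : ℕ => ℝ) ENNReal.top_ne_zero x i)

theorem linfEv_apply (i : ℕ) (x : Linf) : linfEv i x = x i := rfl

theorem linfEv_norm (i : ℕ) : ‖linfEv i‖ ≤ 1 := LinearMap.mkContinuous_norm_le _ zero_le_one _

/-- restriction of an ℓ∞ element to a set of coordinates -/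
noncomputable def linfRestr (p : ℕ → Prop) [DecidablePred p] (x : Linf) : Linf :=
  ⟨fun i => if p i then x i else 0, memℓp_infty (by
    refine ⟨‖x‖, ?_⟩
    rintro r ⟨i, rfl⟩
    dsimp only
    split
    · exact lp.norm_apply_le_norm ENNReal.top_ne_zero x i
    · simp)⟩

theorem linfRestr_apply (p : ℕ → Prop) [DecidablePred p] (x : Linf) (i : ℕ) :
    linfRestr p x i = if p i then x i else 0 := rfl

/-- the constant-one element of ℓ∞ -/
noncomputable def linfOne : Linf :=
  ⟨fun _ => (1 : ℝ), memℓp_infty (by refine ⟨1, ?_⟩; rintro r ⟨i, rfl⟩; simp)⟩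

theorem linfOne_apply (i : ℕ) : linfOne i = 1 := rfl

end Aux

/-- ℓ∞ does not have the disjoint Grothendieck property: the sequence
`uₙ = e_{2n} + e_{2n+1}` of ℓ¹ ⊆ (ℓ∞)' is norm bounded and pairwise disjoint,
but not weakly null in (ℓ∞)'. -/
theorem linf_not_dgp [Lattice (StrongDual ℝ Linf)]
    (hord : ∀ f g : StrongDual ℝ Linf, f ≤ g ↔ ∀ x : Linf, (∀ i, 0 ≤ x i) → f x ≤ g x) :
    ¬ HasDGP Linf ∧
    ∃ u' : ℕ → StrongDual ℝ Linf, (∀ n (x : Linf), u' n x = x (2 * n) + x (2 * n + 1)) ∧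
      (∃ C, ∀ n, ‖u' n‖ ≤ C) ∧ (Pairwise fun m n => |u' m| ⊓ |u' n| = 0) ∧
      ¬ WeaklyNullDual Linf u' := by
  classical
  set u' : ℕ → StrongDual ℝ Linf := fun n => linfEv (2 * n) + linfEv (2 * n + 1) with hu'
  have happ : ∀ n (x : Linf), u' n x = x (2 * n) + x (2 * n + 1) := by
    intro n x
    simp [hu', ContinuousLinearMap.add_apply, linfEv_apply]
  -- nonnegativity
  have hpos : ∀ n, (0 : StrongDual ℝ Linf) ≤ u' n := by
    intro n
    rw [hord]
    intro x hx
    rw [happ, ContinuousLinearMap.zero_apply]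
    exact add_nonneg (hx _) (hx _)
  have habs : ∀ n, |u' n| = u' n := by
    intro n
    have hneg : -u' n ≤ u' n := by
      rw [hord]
      intro x hx
      have h0 : 0 ≤ u' n x := by rw [happ]; exact add_nonneg (hx _) (hx _)
      rw [ContinuousLinearMap.neg_apply]
      linarith
    exact sup_eq_left.mpr hneg
  -- norm bound
  have hbdd : ∀ n, ‖u' n‖ ≤ 2 := by
    intro n
    rw [hu']
    calc ‖linfEv (2 * n) + linfEv (2 * n + 1)‖
        ≤ ‖linfEv (2 * n)‖ + ‖linfEv (2 * n + 1)‖ := norm_add_le _ _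
    _ ≤ 1 + 1 := add_le_add (linfEv_norm _) (linfEv_norm _)
    _ = 2 := by norm_num
  -- pairwise disjoint
  have hdisj : Pairwise fun m n => |u' m| ⊓ |u' n| = 0 := by
    intro m n hmn
    rw [habs, habs]
    refine le_antisymm ?_ (le_inf (hpos m) (hpos n))
    rw [hord]
    intro x hx
    rw [ContinuousLinearMap.zero_apply]
    set p1 : ℕ → Prop := fun i => i = 2 * m ∨ i = 2 * m + 1 with hp1
    set p2 : ℕ → Prop := fun i => i = 2 * n ∨ i = 2 * n + 1 with hp2
    set p3 : ℕ → Prop := fun i => ¬ p1 i ∧ ¬ p2 i with hp3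
    have hdec : x = linfRestr p1 x + linfRestr p2 x + linfRestr p3 x := by
      apply Subtype.ext
      funext i
      simp only [lp.coeFn_add, Pi.add_apply, linfRestr_apply, hp3]
      by_cases h1 : p1 i
      · have h2 : ¬ p2 i := by
          rw [hp1] at h1; rw [hp2]
          rcases h1 with h1 | h1 <;> (rintro (h | h) <;> omega)
        simp [h1, h2]
      · by_cases h2 : p2 i
        · simp [h1, h2]
        · simp [h1, h2]
    have hr1 : ∀ (p : ℕ → Prop) (inst : DecidablePred p),
        ∀ i, (0:ℝ) ≤ linfRestr p x i := by
      intro p _ i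
      rw [linfRestr_apply]
      split
      · exact hx i
      · exact le_refl 0
    have key1 : (u' m ⊓ u' n) (linfRestr p1 x) ≤ 0 := by
      have := (hord (u' m ⊓ u' n) (u' n)).mp inf_le_right (linfRestr p1 x) (hr1 p1 _)
      refine this.trans ?_
      rw [happ]
      have e1 : ¬ p1 (2 * n) := by rintro (h | h) <;> omega
      have e2 : ¬ p1 (2 * n + 1) := by rintro (h | h) <;> omega
      rw [linfRestr_apply, linfRestr_apply, if_neg e1, if_neg e2, add_zero]
    have key2 : (u' m ⊓ u' n) (linfRestr p2 x) ≤ 0 := by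
      have := (hord (u' m ⊓ u' n) (u' m)).mp inf_le_left (linfRestr p2 x) (hr1 p2 _)
      refine this.trans ?_
      rw [happ]
      have e1 : ¬ p2 (2 * m) := by rintro (h | h) <;> omega
      have e2 : ¬ p2 (2 * m + 1) := by rintro (h | h) <;> omega
      rw [linfRestr_apply, linfRestr_apply, if_neg e1, if_neg e2, add_zero]
    have key3 : (u' m ⊓ u' n) (linfRestr p3 x) ≤ 0 := by
      have := (hord (u' m ⊓ u' n) (u' m)).mp inf_le_left (linfRestr p3 x) (hr1 p3 _)
      refine this.trans ?_
      rw [happ]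
      have e1 : ¬ p3 (2 * m) := fun h => h.1 (Or.inl rfl)
      have e2 : ¬ p3 (2 * m + 1) := fun h => h.1 (Or.inr rfl)
      rw [linfRestr_apply, linfRestr_apply, if_neg e1, if_neg e2, add_zero]
    have hsum : (u' m ⊓ u' n) x
        = (u' m ⊓ u' n) (linfRestr p1 x) + (u' m ⊓ u' n) (linfRestr p2 x)
          + (u' m ⊓ u' n) (linfRestr p3 x) := by
      conv_lhs => rw [hdec]
      rw [map_add, map_add]
    rw [hsum]
    linarith
  -- not weakly null
  have hnwn : ¬ WeaklyNullDual Linf u' := by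
    intro hWN
    have h2 : ∀ n, (inclusionInDoubleDual ℝ Linf linfOne) (u' n) = 2 := by
      intro n
      rw [NormedSpace.dual_def, happ, linfOne_apply, linfOne_apply]
      norm_num
    have := hWN (inclusionInDoubleDual ℝ Linf linfOne)
    simp only [h2] at this
    have h02 : (2:ℝ) = 0 := tendsto_nhds_unique tendsto_const_nhds this
    norm_num at h02
  exact ⟨fun hd => hnwn (hd u' ⟨2, hbdd⟩ hdisj), u', happ, ⟨2, hbdd⟩, hdisj, hnwn⟩
end

section
/- The Banach lattice ℓ¹ has the disjoint Grothendieck property: every norm bounded pairwise disjoint sequence in ℓ∞ = (ℓ¹)' is weakly null. -/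
open Filter Topology NormedSpace

open ENNReal

/-- ℓ¹ has the disjoint Grothendieck property: every norm bounded pairwise disjoint
sequence in ℓ∞ = (ℓ¹)' is weakly null (disjointness of ℓ∞ is pointwise). -/
theorem lone_dgp (x : ℕ → Linf) (hb : ∃ C, ∀ n, ‖x n‖ ≤ C)
    (hd : Pairwise fun m n => ∀ i, min |x m i| |x n i| = 0) :
    ∀ F : StrongDual ℝ Linf, Tendsto (fun n => F (x n)) atTop (𝓝 0) := by
  obtain ⟨C, hC⟩ := hb
  have hC0 : 0 ≤ C := le_trans (norm_nonneg (x 0)) (hC 0)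
  intro F
  -- signs
  set c : ℕ → ℝ := fun n => Real.sign (F (x n)) with hc
  have hc1 : ∀ n, |c n| ≤ 1 := by
    intro n
    rcases Real.sign_apply_eq (F (x n)) with h | h | h <;> simp [hc, h]
  have hsign : ∀ n, c n * F (x n) = |F (x n)| := by
    intro n
    simp only [hc]
    rcases lt_trichotomy (F (x n)) 0 with h | h | h
    · rw [Real.sign_of_neg h, abs_of_neg h]; ring
    · simp [h]
    · rw [Real.sign_of_pos h, abs_of_pos h]; ring
  -- partial sums bounded
  have key : ∀ s : Finset ℕ, ∑ n ∈ s, |F (x n)| ≤ ‖F‖ * C := by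
    intro s
    set y : Linf := ∑ n ∈ s, c n • x n with hy
    have hyi : ∀ i, y i = ∑ n ∈ s, c n * x n i := by
      intro i
      rw [hy, lp.coeFn_sum, Finset.sum_apply]
      refine Finset.sum_congr rfl fun n _ => ?_
      rw [lp.coeFn_smul]; rfl
    have hynorm : ‖y‖ ≤ C := by
      refine lp.norm_le_of_forall_le hC0 fun i => ?_
      rw [hyi i]
      by_cases h : ∃ n ∈ s, x n i ≠ 0
      · obtain ⟨n0, hn0s, hn0⟩ := h
        rw [Finset.sum_eq_single_of_mem n0 hn0s ?_]
        · calc ‖c n0 * x n0 i‖ = |c n0| * |x n0 i| := abs_mul _ _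
            _ ≤ 1 * |x n0 i| := by
                exact mul_le_mul_of_nonneg_right (hc1 n0) (abs_nonneg _)
            _ = ‖x n0 i‖ := by rw [one_mul]; rfl
            _ ≤ ‖x n0‖ := lp.norm_apply_le_norm ENNReal.top_ne_zero (x n0) i
            _ ≤ C := hC n0
        · intro m hms hmn
          have := hd hmn i
          have hxm : x m i = 0 := by
            rcases min_eq_iff.mp this with ⟨h1, _⟩ | ⟨h1, _⟩
            · exact abs_eq_zero.mp h1
            · exact (hn0 (abs_eq_zero.mp h1)).elim
          rw [hxm, mul_zero]
      · push_neg at h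
        have : ∑ n ∈ s, c n * x n i = 0 := by
          refine Finset.sum_eq_zero fun n hn => ?_
          rw [h n hn, mul_zero]
        rw [this, norm_zero]; exact hC0
    have hFy : F y = ∑ n ∈ s, |F (x n)| := by
      rw [hy, map_sum]
      refine Finset.sum_congr rfl fun n _ => ?_
      rw [map_smul, smul_eq_mul, hsign n]
    calc ∑ n ∈ s, |F (x n)| = F y := hFy.symm
      _ ≤ ‖F y‖ := le_abs_self _
      _ ≤ ‖F‖ * ‖y‖ := F.le_opNorm y
      _ ≤ ‖F‖ * C := by
          exact mul_le_mul_of_nonneg_left hynorm (norm_nonneg F)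
  have hsum : Summable fun n => |F (x n)| :=
    summable_of_sum_le (fun n => abs_nonneg _) key
  have := hsum.tendsto_atTop_zero
  rw [tendsto_zero_iff_abs_tendsto_zero]
  exact this
end

section
/- The Banach lattice ℓ¹ does not have the unbounded Grothendieck property: the sequence v_n ∈ ℓ∞ = (ℓ¹)' whose first n coordinates are 0 and remaining coordinates are 1 is unbounded weak* null but not weakly null in ℓ∞. -/
open Filter Topology NormedSpace

open ENNReal

/-- ℓ¹ -/
noncomputable abbrev Lone : Type := lp (fun _ : ℕ => ℝ) 1

lemma lone_summable (x : Lone) : Summable fun i => ‖x i‖ := by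
  have h := lp.memℓp x
  rw [memℓp_gen_iff (by norm_num)] at h
  simpa using h

lemma lone_norm (x : Lone) : ‖x‖ = ∑' i, ‖x i‖ := by
  have := lp.norm_eq_tsum_rpow (p := 1) (by norm_num) x
  simpa using this

def cf (n i : ℕ) : ℝ := if i < n then 0 else 1

lemma cf_nonneg (n i : ℕ) : 0 ≤ cf n i := by unfold cf; split <;> norm_num

lemma cf_norm_le (n i : ℕ) : ‖cf n i‖ ≤ 1 := by
  unfold cf; split <;> simp

lemma summ (n : ℕ) (x : Lone) : Summable fun i => cf n i * x i := by
  apply Summable.of_norm_bounded (lone_summable x)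
  intro i
  rw [norm_mul]
  calc ‖cf n i‖ * ‖x i‖ ≤ 1 * ‖x i‖ :=
        mul_le_mul_of_nonneg_right (cf_norm_le n i) (norm_nonneg _)
    _ = ‖x i‖ := one_mul _

noncomputable def vL (n : ℕ) : StrongDual ℝ Lone :=
  LinearMap.mkContinuous
    { toFun := fun x => ∑' i, cf n i * x i
      map_add' := fun x y => by
        simp only [lp.coeFn_add, Pi.add_apply, mul_add]
        exact Summable.tsum_add (summ n x) (summ n y)
      map_smul' := fun c x => by
        simp only [lp.coeFn_smul, Pi.smul_apply, smul_eq_mul, RingHom.id_apply]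
        rw [← tsum_mul_left]
        exact tsum_congr fun i => by ring }
    1
    (fun x => by
      simp only [LinearMap.coe_mk, AddHom.coe_mk, one_mul]
      calc ‖∑' i, cf n i * x i‖ ≤ ∑' i, ‖cf n i * x i‖ :=
            norm_tsum_le_tsum_norm ((summ n x).norm)
        _ ≤ ∑' i, ‖x i‖ := by
            apply Summable.tsum_le_tsum _ (summ n x).norm (lone_summable x)
            intro i
            rw [norm_mul]
            calc ‖cf n i‖ * ‖x i‖ ≤ 1 * ‖x i‖ :=
                  mul_le_mul_of_nonneg_right (cf_norm_le n i) (norm_nonneg _)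
              _ = ‖x i‖ := one_mul _
        _ = ‖x‖ := (lone_norm x).symm)

lemma vL_apply (n : ℕ) (x : Lone) : vL n x = ∑' i, cf n i * x i := rfl

lemma vL_norm_le (n : ℕ) : ‖vL n‖ ≤ 1 :=
  LinearMap.mkContinuous_norm_le _ zero_le_one _

noncomputable def absE (x : Lone) : Lone :=
  ⟨fun i => |x i|, by
    apply memℓp_gen
    have := lone_summable x
    simpa [Real.norm_eq_abs, abs_abs] using this⟩

lemma absE_apply (x : Lone) (i : ℕ) : (absE x) i = |x i| := rfl

noncomputable def headE (x : Lone) (N : ℕ) : Lone :=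
  ⟨fun i => if i < N then |x i| else 0, by
    apply memℓp_gen
    apply summable_of_ne_finset_zero (s := Finset.range N)
    intro i hi
    rw [Finset.mem_range] at hi
    simp [hi]⟩

lemma headE_apply (x : Lone) (N i : ℕ) :
    (headE x N) i = if i < N then |x i| else 0 := rfl

lemma tailg_summable (x : Lone) (N : ℕ) :
    Summable fun i => if i < N then (0:ℝ) else ‖x i‖ := by
  apply Summable.of_nonneg_of_le _ _ (lone_summable x)
  · intro i; split <;> [norm_num; exact norm_nonneg _]
  · intro i; split <;> [exact norm_nonneg _; exact le_rfl]

lemma tail_norm (x : Lone) (N : ℕ) :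
    ‖absE x - headE x N‖ = ∑' i, ‖x (i + N)‖ := by
  rw [lone_norm]
  have h1 : ∀ i, ‖(absE x - headE x N) i‖ = if i < N then (0:ℝ) else ‖x i‖ := by
    intro i
    have : (absE x - headE x N) i = |x i| - (if i < N then |x i| else 0) := by
      rw [lp.coeFn_sub, Pi.sub_apply, absE_apply, headE_apply]
    rw [this]
    by_cases h : i < N
    · simp [h]
    · simp [h, Real.norm_eq_abs, abs_abs]
  rw [tsum_congr h1]
  have h2 := Summable.sum_add_tsum_nat_add (f := fun i => if i < N then (0:ℝ) else ‖x i‖) N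
    (tailg_summable x N)
  have h3 : ∑ i ∈ Finset.range N, (if i < N then (0:ℝ) else ‖x i‖) = 0 := by
    apply Finset.sum_eq_zero
    intro i hi
    rw [Finset.mem_range] at hi
    simp [hi]
  have h4 : ∀ i : ℕ, (if i + N < N then (0:ℝ) else ‖x (i + N)‖) = ‖x (i + N)‖ := by
    intro i
    rw [if_neg (by omega)]
  rw [h3, zero_add] at h2
  rw [← h2]
  exact tsum_congr h4

lemma vL_single (n k : ℕ) : vL n (lp.single 1 k 1) = cf n k := by
  rw [vL_apply]
  have h : ∀ i, cf n i * ((lp.single 1 k 1 : Lone)) i = if i = k then cf n k else 0 := by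
    intro i
    by_cases h : i = k
    · subst h; simp [lp.single_apply_self]
    · simp [lp.single_apply_ne _ _ _ h, h]
  rw [tsum_congr h, tsum_ite_eq]

noncomputable def limF (f : StrongDual ℝ Lone) : ℝ :=
  limUnder (hyperfilter ℕ : Filter ℕ) fun k => f (lp.single 1 k 1)

lemma limF_spec (f : StrongDual ℝ Lone) :
    Tendsto (fun k => f (lp.single 1 k 1)) (hyperfilter ℕ : Filter ℕ) (𝓝 (limF f)) ∧
      |limF f| ≤ ‖f‖ := by
  have hb : ∀ k, f (lp.single 1 k 1) ∈ Set.Icc (-‖f‖) ‖f‖ := by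
    intro k
    have h1 : ‖(lp.single 1 k 1 : Lone)‖ = 1 := by
      have := lp.norm_single (E := fun _ : ℕ => ℝ) (p := 1) (by norm_num)
        k (1:ℝ)
      simpa using this
    have h2 := f.le_opNorm (lp.single 1 k 1)
    rw [h1, mul_one] at h2
    rw [Real.norm_eq_abs] at h2
    exact Set.mem_Icc.mpr (abs_le.mp h2)
  have hmem : (↑((hyperfilter ℕ).map fun k => f (lp.single 1 k 1)) : Filter ℝ) ≤
      Filter.principal (Set.Icc (-‖f‖) ‖f‖) := by
    rw [Ultrafilter.coe_map]
    rw [Filter.le_principal_iff, Filter.mem_map]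
    exact Filter.univ_mem' hb
  obtain ⟨a, ha_mem, ha⟩ := (isCompact_Icc (a := -‖f‖) (b := ‖f‖)).ultrafilter_le_nhds
    _ hmem
  rw [Ultrafilter.coe_map] at ha
  have hT : Tendsto (fun k => f (lp.single 1 k 1)) (hyperfilter ℕ : Filter ℕ) (𝓝 a) := ha
  have heq : limF f = a := hT.limUnder_eq
  rw [heq]
  exact ⟨hT, abs_le.mpr ⟨(Set.mem_Icc.mp ha_mem).1, (Set.mem_Icc.mp ha_mem).2⟩⟩

noncomputable def FF : StrongDual ℝ (StrongDual ℝ Lone) :=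
  LinearMap.mkContinuous
    { toFun := limF
      map_add' := fun f g => by
        have h : Tendsto (fun k => (f + g) (lp.single 1 k 1)) (hyperfilter ℕ : Filter ℕ)
            (𝓝 (limF f + limF g)) := by
          simp only [ContinuousLinearMap.add_apply]
          exact (limF_spec f).1.add (limF_spec g).1
        exact tendsto_nhds_unique (limF_spec (f + g)).1 h
      map_smul' := fun c f => by
        have h : Tendsto (fun k => (c • f) (lp.single 1 k 1)) (hyperfilter ℕ : Filter ℕ)
            (𝓝 (c * limF f)) := by
          simp only [ContinuousLinearMap.smul_apply, smul_eq_mul]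
          exact (limF_spec f).1.const_mul c
        simpa using tendsto_nhds_unique (limF_spec (c • f)).1 h }
    1
    (fun f => by
      simp only [LinearMap.coe_mk, AddHom.coe_mk, one_mul, Real.norm_eq_abs]
      exact (limF_spec f).2)

lemma FF_vL (n : ℕ) : FF (vL n) = 1 := by
  have hev : (fun k => vL n (lp.single 1 k 1)) =ᶠ[(hyperfilter ℕ : Filter ℕ)]
      fun _ => (1:ℝ) := by
    have h1 : ∀ᶠ k in atTop, vL n (lp.single 1 k 1) = 1 := by
      filter_upwards [eventually_ge_atTop n] with k hk
      rw [vL_single]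
      unfold cf
      rw [if_neg (not_lt.mpr hk)]
    exact h1.filter_mono Nat.hyperfilter_le_atTop
  have hT : Tendsto (fun k => vL n (lp.single 1 k 1)) (hyperfilter ℕ : Filter ℕ) (𝓝 1) :=
    Tendsto.congr' hev.symm tendsto_const_nhds
  exact tendsto_nhds_unique (limF_spec (vL n)).1 hT

section Main

variable [Lattice (StrongDual ℝ Lone)]

theorem main_thm
    (hord : ∀ f g : StrongDual ℝ Lone, f ≤ g ↔ ∀ x : Lone, (∀ i, 0 ≤ x i) → f x ≤ g x) :
    (∃ C, ∀ n, ‖vL n‖ ≤ C) ∧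
    (∀ u' : StrongDual ℝ Lone, 0 ≤ u' → ∀ v : Lone,
      Tendsto (fun n => (|vL n| ⊓ u') v) atTop (𝓝 0)) ∧
    ¬ (∀ F : StrongDual ℝ (StrongDual ℝ Lone), Tendsto (fun n => F (vL n)) atTop (𝓝 0)) := by
  have hpos : ∀ n, (0 : StrongDual ℝ Lone) ≤ vL n := by
    intro n
    rw [hord]
    intro x hx
    rw [ContinuousLinearMap.zero_apply, vL_apply]
    exact tsum_nonneg fun i => mul_nonneg (cf_nonneg n i) (hx i)
  have happly_nonneg : ∀ w : StrongDual ℝ Lone, 0 ≤ w → ∀ y : Lone, (∀ i, 0 ≤ y i) → 0 ≤ w y := by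
    intro w hw y hy
    have := (hord 0 w).mp hw y hy
    simpa using this
  have hle_apply : ∀ w₁ w₂ : StrongDual ℝ Lone, w₁ ≤ w₂ → ∀ y : Lone, (∀ i, 0 ≤ y i) →
      w₁ y ≤ w₂ y := fun w₁ w₂ h y hy => (hord w₁ w₂).mp h y hy
  have habs : ∀ n, |vL n| = vL n := by
    intro n
    have h1 : -(vL n) ≤ vL n := by
      rw [hord]
      intro x hx
      have h0 : 0 ≤ vL n x := happly_nonneg (vL n) (hpos n) x hx
      rw [ContinuousLinearMap.neg_apply]
      linarith
    show vL n ⊔ -vL n = vL n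
    exact sup_eq_left.mpr h1
  refine ⟨⟨1, vL_norm_le⟩, ?_, ?_⟩
  · intro u' hu' x
    rw [Metric.tendsto_atTop]
    intro ε hε
    have htail : Tendsto (fun N => ‖u'‖ * ∑' i, ‖x (i + N)‖) atTop (𝓝 0) := by
      have := tendsto_sum_nat_add fun i => ‖x i‖
      simpa using this.const_mul ‖u'‖
    obtain ⟨N, hN⟩ := (Metric.tendsto_atTop.mp htail) ε hε
    have hNb : ‖u'‖ * ∑' i, ‖x (i + N)‖ < ε := by
      have := hN N le_rfl
      rw [Real.dist_eq, sub_zero] at this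
      exact lt_of_le_of_lt (le_abs_self _) this
    refine ⟨N, fun n hn => ?_⟩
    rw [Real.dist_eq, sub_zero, habs n]
    set w : StrongDual ℝ Lone := vL n ⊓ u' with hw
    have hw0 : 0 ≤ w := le_inf (hpos n) hu'
    -- |w x| ≤ w (absE x)
    have hwx : |w x| ≤ w (absE x) := by
      have h1 : 0 ≤ w (absE x - x) := by
        apply happly_nonneg w hw0
        intro i
        rw [lp.coeFn_sub, Pi.sub_apply, absE_apply]
        linarith [le_abs_self (x i)]
      have h2 : 0 ≤ w (absE x + x) := by
        apply happly_nonneg w hw0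
        intro i
        rw [lp.coeFn_add, Pi.add_apply, absE_apply]
        linarith [neg_abs_le (x i)]
      rw [map_sub] at h1
      rw [map_add] at h2
      rw [abs_le]
      constructor <;> linarith
    -- split
    have hsplit : w (absE x) = w (headE x N) + w (absE x - headE x N) := by
      rw [map_sub]; ring
    have hhead : w (headE x N) ≤ vL n (headE x N) := by
      apply hle_apply w (vL n) inf_le_left
      intro i
      rw [headE_apply]
      split
      · exact abs_nonneg _
      · exact le_rfl
    have hheadzero : vL n (headE x N) = 0 := by
      rw [vL_apply]
      have h0 : ∀ i, cf n i * (headE x N) i = 0 := by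
        intro i
        by_cases h : i < n
        · unfold cf; rw [if_pos h, zero_mul]
        · rw [headE_apply, if_neg (by omega), mul_zero]
      rw [tsum_congr h0, tsum_zero]
    have htailpos : ∀ i, (0:ℝ) ≤ (absE x - headE x N) i := by
      intro i
      rw [lp.coeFn_sub, Pi.sub_apply, absE_apply, headE_apply]
      split
      · simp
      · simp [abs_nonneg]
    have htl : w (absE x - headE x N) ≤ u' (absE x - headE x N) :=
      hle_apply w u' inf_le_right _ htailpos
    have hub : u' (absE x - headE x N) ≤ ‖u'‖ * ∑' i, ‖x (i + N)‖ := by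
      calc u' (absE x - headE x N) ≤ ‖u' (absE x - headE x N)‖ := le_abs_self _
        _ ≤ ‖u'‖ * ‖absE x - headE x N‖ := u'.le_opNorm _
        _ = ‖u'‖ * ∑' i, ‖x (i + N)‖ := by rw [tail_norm]
      -- done
    calc |w x| ≤ w (absE x) := hwx
      _ = w (headE x N) + w (absE x - headE x N) := hsplit
      _ ≤ 0 + (‖u'‖ * ∑' i, ‖x (i + N)‖) := by
          apply add_le_add (hhead.trans_eq hheadzero) (htl.trans hub)
      _ = ‖u'‖ * ∑' i, ‖x (i + N)‖ := zero_add _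
      _ < ε := hNb
  · intro h
    have h1 : Tendsto (fun n => FF (vL n)) atTop (𝓝 0) := h FF
    have h2 : Tendsto (fun _ : ℕ => (1:ℝ)) atTop (𝓝 0) := by
      refine h1.congr fun n => ?_
      rw [FF_vL]
    exact one_ne_zero (tendsto_nhds_unique tendsto_const_nhds h2)

end Main


/-- ℓ¹ does not have the unbounded Grothendieck property: the sequence
`vₙ = (0,…,0,1,1,…)` (n zeros) in ℓ∞ = (ℓ¹)' is norm bounded and unbounded weak* null
but not weakly null. -/
theorem lone_not_ugp [Lattice (StrongDual ℝ Lone)]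
    (hord : ∀ f g : StrongDual ℝ Lone, f ≤ g ↔ ∀ x : Lone, (∀ i, 0 ≤ x i) → f x ≤ g x) :
    ¬ HasUGP Lone ∧
    ∃ v' : ℕ → StrongDual ℝ Lone,
      (∀ n (x : Lone), v' n x = ∑' i, (if i < n then (0 : ℝ) else 1) * x i) ∧
      (∃ C, ∀ n, ‖v' n‖ ≤ C) ∧ UawStarNull Lone v' ∧ ¬ WeaklyNullDual Lone v' := 
by
  obtain ⟨hb, huaw, hnw⟩ := main_thm hord
  have huaw' : UawStarNull Lone vL := huaw
  have hnw' : ¬ WeaklyNullDual Lone vL := hnw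
  exact ⟨fun h => hnw' (h vL hb huaw'), vL, fun n x => vL_apply n x, hb, huaw', hnw'⟩
end

section
/- If E is an order continuous Banach lattice, then every norm bounded pairwise disjoint sequence in E' is weak* null. -/
open Filter Topology NormedSpace

namespace DWSN

/-! ### Generic lattice-ordered group lemmas -/

section Generic
variable {α : Type*} [Lattice α] [AddCommGroup α]
  [CovariantClass α α (· + ·) (· ≤ ·)] [CovariantClass α α (Function.swap (· + ·)) (· ≤ ·)]

lemma aux_inf_add_le {a b c : α} (ha : 0 ≤ a) (hb : 0 ≤ b) (hc : 0 ≤ c) :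
    (a + b) ⊓ c ≤ a ⊓ c + b ⊓ c := by
  have h : (a + b) ⊓ c - a ⊓ c ≤ b ⊓ c := by
    rw [sub_inf]
    apply sup_le
    · refine le_inf ?_ ?_
      · exact sub_le_iff_le_add'.2 inf_le_left
      · exact sub_le_iff_le_add'.2 (le_trans inf_le_right (le_add_of_nonneg_left ha))
    · exact le_trans (sub_nonpos.2 inf_le_right) (le_inf hb hc)
  exact sub_le_iff_le_add'.1 h

lemma aux_disj_add {a b c : α} (ha : 0 ≤ a) (hb : 0 ≤ b) (hc : 0 ≤ c)
    (h1 : a ⊓ c = 0) (h2 : b ⊓ c = 0) : (a + b) ⊓ c = 0 := by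
  refine le_antisymm ?_ (le_inf (add_nonneg ha hb) hc)
  have := aux_inf_add_le ha hb hc
  rwa [h1, h2, add_zero] at this

lemma aux_nsmul_nonneg {a : α} (ha : 0 ≤ a) (n : ℕ) : 0 ≤ n • a := by
  induction n with
  | zero => simp
  | succ k ih => rw [succ_nsmul]; exact add_nonneg ih ha

lemma aux_nsmul_sub (n : ℕ) (a b : α) : n • (a - b) = n • a - n • b := by
  induction n with
  | zero => simp
  | succ k ih => rw [succ_nsmul, succ_nsmul, succ_nsmul, ih]; abel

lemma aux_nsmul_disj {a b : α} (ha : 0 ≤ a) (hb : 0 ≤ b) (h : a ⊓ b = 0) (n : ℕ) :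
    (n • a) ⊓ b = 0 := by
  induction n with
  | zero => rw [zero_smul]; exact le_antisymm inf_le_left (le_inf le_rfl hb)
  | succ k ih => rw [succ_nsmul]; exact aux_disj_add (aux_nsmul_nonneg ha k) ha hb ih h

lemma aux_nsmul_disj₂ {a b : α} (ha : 0 ≤ a) (hb : 0 ≤ b) (h : a ⊓ b = 0) (n m : ℕ) :
    (n • a) ⊓ (m • b) = 0 := by
  have h1 : (n • a) ⊓ b = 0 := aux_nsmul_disj ha hb h n
  rw [inf_comm] at h1 ⊢
  exact aux_nsmul_disj hb (aux_nsmul_nonneg ha n) h1 m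

lemma aux_posPart_eq {b c : α} (hb : 0 ≤ b) (hc : 0 ≤ c) (h : b ⊓ c = 0) : (b - c)⁺ = b := by
  have h1 : (b - c) ⊔ 0 = (b ⊔ c) - c := by rw [sup_sub, sub_self]
  have h2 : b ⊔ c = b + c := by
    have := inf_add_sup b c
    rwa [h, zero_add] at this
  rw [posPart_def, h1, h2, add_sub_cancel_right]

lemma aux_nsmul_posPart (n : ℕ) (a : α) : (n • a)⁺ = n • a⁺ := by
  have h1 : n • a = n • a⁺ - n • a⁻ := by rw [← aux_nsmul_sub, posPart_sub_negPart]
  rw [h1, aux_posPart_eq (aux_nsmul_nonneg (posPart_nonneg a) n)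
    (aux_nsmul_nonneg (negPart_nonneg a) n)
    (aux_nsmul_disj₂ (posPart_nonneg a) (negPart_nonneg a) (posPart_inf_negPart_eq_zero a) n n)]

end Generic

/-! ### The dual side -/

section DualSide

variable {E : Type*} [NormedAddCommGroup E] [Lattice E] [IsOrderedAddMonoid E] [HasSolidNorm E] [NormedSpace ℝ E] [CompleteSpace E]
  [Lattice (StrongDual ℝ E)]

/-- The Riesz–Kantorovich candidate set. -/
def RKset (f g : StrongDual ℝ E) (u : E) : Set ℝ := (fun y => f y + g (u - y)) '' {y | 0 ≤ y ∧ y ≤ u}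

lemma RKset_nonempty (f g : StrongDual ℝ E) {u : E} (hu : 0 ≤ u) : (RKset f g u).Nonempty :=
  ⟨f 0 + g (u - 0), 0, ⟨le_rfl, hu⟩, rfl⟩

lemma RKset_lb (f g : StrongDual ℝ E) {u : E} (hu : 0 ≤ u) :
    ∀ r ∈ RKset f g u, -((‖f‖ + ‖g‖) * ‖u‖) ≤ r := by
  rintro r ⟨y, ⟨hy0, hyu⟩, rfl⟩
  have h1 : ‖y‖ ≤ ‖u‖ := by
    refine norm_le_norm_of_abs_le_abs ?_
    rwa [abs_of_nonneg hy0, abs_of_nonneg hu]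
  have h2 : ‖u - y‖ ≤ ‖u‖ := by
    refine norm_le_norm_of_abs_le_abs ?_
    rw [abs_of_nonneg (sub_nonneg.2 hyu), abs_of_nonneg hu]
    exact sub_le_self _ hy0
  have h3 : |f y| ≤ ‖f‖ * ‖u‖ := by
    rw [← Real.norm_eq_abs]
    exact le_trans (f.le_opNorm y) (mul_le_mul_of_nonneg_left h1 (norm_nonneg f))
  have h4 : |g (u - y)| ≤ ‖g‖ * ‖u‖ := by
    rw [← Real.norm_eq_abs]
    exact le_trans (g.le_opNorm (u - y)) (mul_le_mul_of_nonneg_left h2 (norm_nonneg g))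
  have h5 := neg_abs_le (f y)
  have h6 := neg_abs_le (g (u - y))
  simp only
  nlinarith [abs_nonneg (f y), abs_nonneg (g (u - y))]

lemma RKset_bddBelow (f g : StrongDual ℝ E) {u : E} (hu : 0 ≤ u) : BddBelow (RKset f g u) :=
  ⟨-((‖f‖ + ‖g‖) * ‖u‖), fun r hr => RKset_lb f g hu r hr⟩

/-- The Riesz–Kantorovich lower-envelope functional. -/
theorem rk_exists (hord : ∀ f g : StrongDual ℝ E, f ≤ g ↔ ∀ x : E, 0 ≤ x → f x ≤ g x)
    (f g : StrongDual ℝ E) :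
    ∃ φ : StrongDual ℝ E, (∀ u : E, 0 ≤ u → φ u = sInf (RKset f g u)) ∧
      (∀ u : E, 0 ≤ u → -((‖f‖ + ‖g‖) * ‖u‖) ≤ φ u) ∧ φ ≤ f ∧ φ ≤ g := by
  set K : ℝ := ‖f‖ + ‖g‖ with hK
  have hK0 : 0 ≤ K := add_nonneg (norm_nonneg f) (norm_nonneg g)
  set p : E → ℝ := fun u => sInf (RKset f g u) with hp
  have hple : ∀ u y : E, 0 ≤ u → 0 ≤ y → y ≤ u → p u ≤ f y + g (u - y) := fun u y hu hy0 hyu =>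
    csInf_le (RKset_bddBelow f g hu) ⟨y, ⟨hy0, hyu⟩, rfl⟩
  have hplb : ∀ u : E, 0 ≤ u → -(K * ‖u‖) ≤ p u := fun u hu =>
    le_csInf (RKset_nonempty f g hu) (RKset_lb f g hu)
  have hpub : ∀ u : E, 0 ≤ u → p u ≤ K * ‖u‖ := by
    intro u hu
    have h1 := hple u u hu hu le_rfl
    have h2 : |f u| ≤ ‖f‖ * ‖u‖ := by
      rw [← Real.norm_eq_abs]; exact f.le_opNorm u
    have h3 : 0 ≤ ‖g‖ * ‖u‖ := mul_nonneg (norm_nonneg g) (norm_nonneg u)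
    simp only [sub_self, map_zero, add_zero] at h1
    have := le_abs_self (f u)
    rw [hK]; nlinarith
  have hpabs : ∀ u : E, 0 ≤ u → |p u| ≤ K * ‖u‖ := fun u hu =>
    abs_le.2 ⟨by simpa using hplb u hu, hpub u hu⟩
  have hpadd : ∀ u v : E, 0 ≤ u → 0 ≤ v → p (u + v) = p u + p v := by
    intro u v hu hv
    have huv : 0 ≤ u + v := add_nonneg hu hv
    apply le_antisymm
    · have le1 : ∀ b ∈ RKset f g v, p (u + v) - b ≤ p u := by
        rintro b ⟨z, ⟨hz0, hzv⟩, rfl⟩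
        apply le_csInf (RKset_nonempty f g hu)
        rintro a ⟨y, ⟨hy0, hyu⟩, rfl⟩
        rw [sub_le_iff_le_add]
        have e : f (y + z) + g (u + v - (y + z)) =
            f y + g (u - y) + (f z + g (v - z)) := by
          have e2 : u + v - (y + z) = (u - y) + (v - z) := by abel
          rw [e2, map_add, map_add]; ring
        rw [← e]
        exact hple (u + v) (y + z) huv (add_nonneg hy0 hz0) (add_le_add hyu hzv)
      have le2 : p (u + v) - p u ≤ p v := by
        apply le_csInf (RKset_nonempty f g hv)
        intro b hb
        have := le1 b hb
        linarith
      linarith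
    · apply le_csInf (RKset_nonempty f g huv)
      rintro r ⟨w, ⟨hw0, hwuv⟩, rfl⟩
      have hy0 : 0 ≤ w ⊓ u := le_inf hw0 hu
      have hyu : w ⊓ u ≤ u := inf_le_right
      have hz0 : 0 ≤ w - w ⊓ u := sub_nonneg.2 inf_le_left
      have hzv : w - w ⊓ u ≤ v := by
        rw [sub_inf, sub_self]
        exact sup_le hv (sub_le_iff_le_add'.2 hwuv)
      have h1 := hple u (w ⊓ u) hu hy0 hyu
      have h2 := hple v (w - w ⊓ u) hv hz0 hzv
      have e : f (w ⊓ u) + g (u - w ⊓ u) + (f (w - w ⊓ u) + g (v - (w - w ⊓ u))) =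
          f w + g (u + v - w) := by
        have e1 : f (w ⊓ u) + f (w - w ⊓ u) = f w := by
          rw [← map_add]; congr 1; abel
        have e2 : g (u - w ⊓ u) + g (v - (w - w ⊓ u)) = g (u + v - w) := by
          rw [← map_add]; congr 1; abel
        linarith
      show p u + p v ≤ f w + g (u + v - w)
      linarith
  have hp0 : p 0 = 0 := by
    have h1 := hple 0 0 le_rfl le_rfl le_rfl
    have h2 := hplb 0 le_rfl
    simp only [map_zero, sub_zero, add_zero, norm_zero, mul_zero, neg_zero] at h1 h2
    linarith
  have hkey : ∀ a b c d : E, 0 ≤ a → 0 ≤ b → 0 ≤ c → 0 ≤ d → a - b = c - d →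
      p a - p b = p c - p d := by
    intro a b c d ha hb hc hd h
    have e : a + d = c + b := sub_eq_sub_iff_add_eq_add.1 h
    have h1 := hpadd a d ha hd
    have h2 := hpadd c b hc hb
    rw [e] at h1
    linarith [h1, h2]
  set φ₀ : E → ℝ := fun x => p x⁺ - p x⁻ with hφ₀
  have hφadd : ∀ x y : E, φ₀ (x + y) = φ₀ x + φ₀ y := by
    intro x y
    have h1 : (x + y)⁺ - (x + y)⁻ = (x⁺ + y⁺) - (x⁻ + y⁻) := by
      rw [posPart_sub_negPart]
      have hx := posPart_sub_negPart x
      have hy := posPart_sub_negPart y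
      have : (x⁺ + y⁺) - (x⁻ + y⁻) = (x⁺ - x⁻) + (y⁺ - y⁻) := by abel
      rw [this, hx, hy]
    have h2 := hkey _ _ _ _ (posPart_nonneg (x + y)) (negPart_nonneg (x + y))
      (add_nonneg (posPart_nonneg x) (posPart_nonneg y))
      (add_nonneg (negPart_nonneg x) (negPart_nonneg y)) h1
    have h3 := hpadd _ _ (posPart_nonneg x) (posPart_nonneg y)
    have h4 := hpadd _ _ (negPart_nonneg x) (negPart_nonneg y)
    simp only [hφ₀]
    rw [h2, h3, h4]; ring
  have hφbound : ∀ x : E, |φ₀ x| ≤ 2 * K * ‖x‖ := by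
    intro x
    have h1 : ‖x⁺‖ ≤ ‖x‖ := by
      refine norm_le_norm_of_abs_le_abs ?_
      rw [abs_of_nonneg (posPart_nonneg x)]
      rw [← posPart_add_negPart x]
      exact le_add_of_nonneg_right (negPart_nonneg x)
    have h2 : ‖x⁻‖ ≤ ‖x‖ := by
      refine norm_le_norm_of_abs_le_abs ?_
      rw [abs_of_nonneg (negPart_nonneg x)]
      rw [← posPart_add_negPart x]
      exact le_add_of_nonneg_left (posPart_nonneg x)
    have h3 := hpabs _ (posPart_nonneg x)
    have h4 := hpabs _ (negPart_nonneg x)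
    have h5 : |φ₀ x| ≤ |p x⁺| + |p x⁻| := abs_sub _ _
    have h7 : K * ‖x⁺‖ ≤ K * ‖x‖ := mul_le_mul_of_nonneg_left h1 hK0
    have h8 : K * ‖x⁻‖ ≤ K * ‖x‖ := mul_le_mul_of_nonneg_left h2 hK0
    nlinarith [norm_nonneg x]
  set φhom : E →+ ℝ := AddMonoidHom.mk' φ₀ hφadd with hφhom
  have hφcont : Continuous φ₀ := by
    have hlip : LipschitzWith (Real.toNNReal (2 * K)) φ₀ := by
      apply LipschitzWith.of_dist_le_mul
      intro a b
      have h1 : φ₀ a - φ₀ b = φ₀ (a - b) := (map_sub φhom a b).symm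
      rw [Real.dist_eq, dist_eq_norm, h1, Real.coe_toNNReal _ (by positivity)]
      exact hφbound (a - b)
    exact hlip.continuous
  set φL : StrongDual ℝ E := AddMonoidHom.toRealLinearMap φhom hφcont with hφL
  have hφLval : ∀ x : E, φL x = φ₀ x := fun x => rfl
  have hval : ∀ u : E, 0 ≤ u → φL u = p u := by
    intro u hu
    rw [hφLval, hφ₀]
    simp only
    rw [posPart_eq_self.2 hu, negPart_eq_zero.2 hu, hp0, sub_zero]
  refine ⟨φL, fun u hu => hval u hu, fun u hu => by rw [hval u hu]; exact hplb u hu, ?_, ?_⟩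
  · rw [hord]
    intro x hx
    rw [hval x hx]
    have := hple x x hx hx le_rfl
    simpa using this
  · rw [hord]
    intro x hx
    rw [hval x hx]
    have := hple x 0 hx le_rfl hx
    simpa using this


variable (hord : ∀ f g : StrongDual ℝ E, f ≤ g ↔ ∀ x : E, 0 ≤ x → f x ≤ g x)

include hord

lemma dual_nonneg_apply {f : StrongDual ℝ E} (hf : 0 ≤ f) {x : E} (hx : 0 ≤ x) : 0 ≤ f x := by
  have := (hord 0 f).1 hf x hx
  simpa using this

lemma dual_nonneg_of_pt {f : StrongDual ℝ E} (h : ∀ x : E, 0 ≤ x → 0 ≤ f x) : 0 ≤ f :=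
  (hord 0 f).2 fun x hx => by simpa using h x hx

lemma dual_mono_apply {f : StrongDual ℝ E} (hf : 0 ≤ f) {a b : E} (hab : a ≤ b) : f a ≤ f b := by
  have := dual_nonneg_apply hord hf (sub_nonneg.2 hab)
  rw [map_sub] at this
  linarith

/-- Key disjointness lemma: near-optimal splittings exist. -/
lemma lemA {f g : StrongDual ℝ E} (hf : 0 ≤ f) (hg : 0 ≤ g) (hfg : f ⊓ g = 0)
    {u : E} (hu : 0 ≤ u) {δ : ℝ} (hδ : 0 < δ) :
    ∃ y : E, 0 ≤ y ∧ y ≤ u ∧ f y + g (u - y) < δ := by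
  obtain ⟨φ, hval, -, hφf, hφg⟩ := rk_exists hord f g
  have h1 : φ ≤ (0 : StrongDual ℝ E) := hfg ▸ le_inf hφf hφg
  have h2 : sInf (RKset f g u) ≤ 0 := by
    rw [← hval u hu]
    have := (hord φ 0).1 h1 u hu
    simpa using this
  have h3 : sInf (RKset f g u) < δ := lt_of_le_of_lt h2 hδ
  obtain ⟨r, hr, hrδ⟩ := (csInf_lt_iff (RKset_bddBelow f g hu) (RKset_nonempty f g hu)).1 h3
  obtain ⟨y, ⟨hy0, hyu⟩, rfl⟩ := hr
  exact ⟨y, hy0, hyu, hrδ⟩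

lemma dual_abs_le {f : StrongDual ℝ E} {x : E} (hx : 0 ≤ x) : f x ≤ |f| x ∧ -(f x) ≤ |f| x := by
  have h1 : f ≤ |f| := le_sup_left
  have h2 : -f ≤ |f| := le_sup_right
  have h3 := (hord f |f|).1 h1 x hx
  have h4 := (hord (-f) |f|).1 h2 x hx
  rw [ContinuousLinearMap.neg_apply] at h4
  exact ⟨h3, h4⟩

lemma dual_abs_nonneg (f : StrongDual ℝ E) : 0 ≤ |f| :=
  dual_nonneg_of_pt hord fun x hx => by
    have := dual_abs_le hord (f := f) hx
    linarith [this.1, this.2]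

lemma dual_abs_apply_bound (f : StrongDual ℝ E) (v : E) : |(|f| : StrongDual ℝ E) v| ≤ 2 * ‖f‖ * ‖v‖ := by
  obtain ⟨φ, -, hlb, hφf, hφg⟩ := rk_exists hord f (-f)
  have habs : |f| ≤ -φ := by
    apply sup_le
    · rw [hord]
      intro x hx
      have h2 := (hord φ (-f)).1 hφg x hx
      simp only [ContinuousLinearMap.neg_apply] at h2 ⊢
      linarith
    · rw [hord]
      intro x hx
      have h2 := (hord φ f).1 hφf x hx
      simp only [ContinuousLinearMap.neg_apply] at h2 ⊢
      linarith
  have hpt : ∀ u : E, 0 ≤ u → |f| u ≤ 2 * ‖f‖ * ‖u‖ := by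
    intro u hu
    have h1 := (hord _ _).1 habs u hu
    rw [ContinuousLinearMap.neg_apply] at h1
    have h2 := hlb u hu
    rw [norm_neg] at h2
    calc |f| u ≤ -(φ u) := h1
      _ ≤ (‖f‖ + ‖f‖) * ‖u‖ := by linarith
      _ = 2 * ‖f‖ * ‖u‖ := by ring
  have h0 : ∀ u : E, 0 ≤ u → 0 ≤ |f| u := fun u hu =>
    dual_nonneg_apply hord (dual_abs_nonneg hord f) hu
  have hv1 : v⁺ ≤ |v| := by
    rw [← posPart_add_negPart v]
    exact le_add_of_nonneg_right (negPart_nonneg v)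
  have hv2 : v⁻ ≤ |v| := by
    rw [← posPart_add_negPart v]
    exact le_add_of_nonneg_left (posPart_nonneg v)
  have h1 : |f| v⁺ ≤ |f| |v| := dual_mono_apply hord (dual_abs_nonneg hord f) hv1
  have h2 : |f| v⁻ ≤ |f| |v| := dual_mono_apply hord (dual_abs_nonneg hord f) hv2
  have h3 : 0 ≤ |f| v⁺ := h0 _ (posPart_nonneg v)
  have h4 : 0 ≤ |f| v⁻ := h0 _ (negPart_nonneg v)
  have h5 : |(|f| : StrongDual ℝ E) v| ≤ |f| |v| := by
    have e : (|f| : StrongDual ℝ E) v = |f| v⁺ - |f| v⁻ := by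
      rw [← map_sub, posPart_sub_negPart]
    rw [e]
    rw [abs_le]
    constructor <;> linarith
  calc |(|f| : StrongDual ℝ E) v| ≤ |f| |v| := h5
    _ ≤ 2 * ‖f‖ * ‖|v|‖ := hpt _ (abs_nonneg v)
    _ = 2 * ‖f‖ * ‖v‖ := by rw [norm_abs_eq_norm]

lemma dual_sum_nonneg {g : ℕ → StrongDual ℝ E} (hg : ∀ n, 0 ≤ g n) (s : Finset ℕ) :
    0 ≤ ∑ i ∈ s, g i := by
  apply dual_nonneg_of_pt hord
  intro x hx
  rw [ContinuousLinearMap.sum_apply]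
  exact Finset.sum_nonneg fun i _ => dual_nonneg_apply hord (hg i) hx

lemma dual_sum_disj {g : ℕ → StrongDual ℝ E} (hg : ∀ n, 0 ≤ g n) {m : ℕ} (s : Finset ℕ)
    (hm : m ∉ s) (hd : ∀ i ∈ s, g i ⊓ g m = 0) : (∑ i ∈ s, g i) ⊓ g m = 0 := by
  haveI : CovariantClass (StrongDual ℝ E) (StrongDual ℝ E) (· + ·) (· ≤ ·) :=
    ⟨fun h f₁ f₂ h12 => (hord _ _).2 fun x hx => by
      have := (hord f₁ f₂).1 h12 x hx
      simp only [ContinuousLinearMap.add_apply]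
      linarith⟩
  haveI : CovariantClass (StrongDual ℝ E) (StrongDual ℝ E) (Function.swap (· + ·)) (· ≤ ·) :=
    ⟨fun h f₁ f₂ h12 => (hord _ _).2 fun x hx => by
      have := (hord f₁ f₂).1 h12 x hx
      simp only [Function.swap, ContinuousLinearMap.add_apply]
      linarith⟩
  induction s using Finset.induction_on with
  | empty =>
    simp only [Finset.sum_empty]
    exact le_antisymm inf_le_left (le_inf le_rfl (hg m))
  | @insert a t hat ih =>
    rw [Finset.sum_insert hat]
    exact aux_disj_add (hg a) (dual_sum_nonneg hord hg t) (hg m)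
      (hd a (Finset.mem_insert_self a t))
      (ih (fun h => hm (Finset.mem_insert_of_mem h)) fun i hi => hd i (Finset.mem_insert_of_mem hi))


end DualSide

section ESide
variable {E : Type*} [NormedAddCommGroup E] [Lattice E] [IsOrderedAddMonoid E] [HasSolidNorm E] [NormedSpace ℝ E]

/-- In a space with order continuous norm, increasing order-bounded sequences have
uniformly small tails. -/
lemma small_jump (hoc : HasOrderContinuousNorm E) (x : E) (s : ℕ → E)
    (hmono : Monotone s) (hbd : ∀ k, s k ≤ x) {δ : ℝ} (hδ : 0 < δ) :
    ∃ N, ∀ M, N ≤ M → ‖s M - s N‖ < δ := by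
  set B : Set E := {u | (∀ N, s N ≤ u) ∧ u ≤ x} with hB
  set A : Set E := {a | ∃ u ∈ B, ∃ N, a = u - s N} with hA
  have hxB : x ∈ B := ⟨hbd, le_rfl⟩
  have hAne : A.Nonempty := ⟨x - s 0, x, hxB, 0, rfl⟩
  have hdir : DirectedOn (· ≥ ·) A := by
    rintro _ ⟨u, hu, N, rfl⟩ _ ⟨v, hv, M, rfl⟩
    refine ⟨u ⊓ v - s (max N M), ⟨u ⊓ v, ⟨fun K => le_inf (hu.1 K) (hv.1 K),
      le_trans inf_le_left hu.2⟩, max N M, rfl⟩, ?_, ?_⟩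
    · exact sub_le_sub inf_le_left (hmono (le_max_left N M))
    · exact sub_le_sub inf_le_right (hmono (le_max_right N M))
  have hglb : IsGLB A 0 := by
    constructor
    · rintro _ ⟨u, hu, N, rfl⟩
      exact sub_nonneg.2 (hu.1 N)
    · intro w hw
      have hwle : ∀ u ∈ B, ∀ N, w ≤ u - s N := fun u hu N => hw ⟨u, hu, N, rfl⟩
      set U : ℕ → E := fun k => Nat.rec x (fun _ uk => (uk - w) ⊓ x) k with hU
      have hU0 : U 0 = x := rfl
      have hUs : ∀ k, U (k + 1) = (U k - w) ⊓ x := fun k => rfl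
      have hUB : ∀ k, U k ∈ B := by
        intro k
        induction k with
        | zero => exact hxB
        | succ k ih =>
          rw [hUs]
          exact ⟨fun N => le_inf (le_sub_comm.1 (hwle (U k) ih N)) (hbd N), inf_le_right⟩
      have hUle : ∀ k, U k ≤ x - k • w := by
        intro k
        induction k with
        | zero => simp [hU0]
        | succ k ih =>
          have h1 : U (k + 1) ≤ U k - w := by rw [hUs]; exact inf_le_left
          have h2 : U k - w ≤ x - k • w - w := sub_le_sub_right ih w
          rw [succ_nsmul, ← sub_sub]
          exact le_trans h1 h2
      have hkw : ∀ k : ℕ, k • w ≤ x - s 0 := by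
        intro k
        have h1 : s 0 ≤ U k := (hUB k).1 0
        have h2 := hUle k
        have := le_trans h1 h2
        exact le_sub_comm.1 this
      set z : E := x - s 0 with hz
      have hz0 : 0 ≤ z := sub_nonneg.2 (hbd 0)
      have hkp : ∀ k : ℕ, k • w⁺ ≤ z := by
        intro k
        have h1 : (k • w)⁺ ≤ z⁺ := posPart_mono (hkw k)
        rwa [aux_nsmul_posPart, posPart_eq_self.2 hz0] at h1
      have hwp : w⁺ = 0 := by
        by_contra hne
        have hpos : 0 < ‖w⁺‖ := norm_pos_iff.2 hne
        obtain ⟨k, hk⟩ := exists_nat_gt (‖z‖ / ‖w⁺‖)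
        have h1 : ‖k • w⁺‖ ≤ ‖z‖ := by
          refine norm_le_norm_of_abs_le_abs ?_
          rw [abs_of_nonneg (aux_nsmul_nonneg (posPart_nonneg w) k), abs_of_nonneg hz0]
          exact hkp k
        have h2 : ‖k • w⁺‖ = (k : ℝ) * ‖w⁺‖ := by
          rw [← Nat.cast_smul_eq_nsmul ℝ, norm_smul, Real.norm_natCast]
        rw [h2] at h1
        have h3 : (k : ℝ) * ‖w⁺‖ > ‖z‖ := by
          rw [gt_iff_lt, ← div_lt_iff₀ hpos] at *
          exact lt_of_lt_of_le hk le_rfl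
        linarith
      calc w ≤ w⁺ := le_posPart w
        _ = 0 := hwp
  obtain ⟨a, ha, hlt⟩ := hoc A hAne hdir hglb δ hδ
  obtain ⟨u, hu, N, rfl⟩ := ha
  refine ⟨N, fun M hM => ?_⟩
  have h1 : s M - s N ≤ u - s N := sub_le_sub_right (hu.1 M) (s N)
  have h2 : 0 ≤ s M - s N := sub_nonneg.2 (hmono hM)
  have h3 : 0 ≤ u - s N := sub_nonneg.2 (hu.1 N)
  refine lt_of_le_of_lt ?_ hlt
  refine norm_le_norm_of_abs_le_abs ?_
  rwa [abs_of_nonneg h2, abs_of_nonneg h3]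

end ESide

section CarrierSec
variable {E : Type*} [NormedAddCommGroup E] [Lattice E] [IsOrderedAddMonoid E] [HasSolidNorm E] [NormedSpace ℝ E] [CompleteSpace E]
  [Lattice (StrongDual ℝ E)]

lemma lim_le {f : ℕ → E} {L c : E} (hf : Filter.Tendsto f atTop (𝓝 L))
    (h : ∀ᶠ k in atTop, f k ≤ c) : L ≤ c := by
  have hclosed : IsClosed {v : E | v ≤ c} := by
    have he : {v : E | v ≤ c} = (fun v => c - v) ⁻¹' {v : E | 0 ≤ v} := by
      ext v; simp [sub_nonneg]
    rw [he]
    exact isClosed_nonneg.preimage (continuous_const.sub continuous_id)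
  exact hclosed.mem_of_tendsto hf h

lemma le_lim {f : ℕ → E} {L c : E} (hf : Filter.Tendsto f atTop (𝓝 L))
    (h : ∀ᶠ k in atTop, c ≤ f k) : c ≤ L := by
  have hclosed : IsClosed {v : E | c ≤ v} := by
    have he : {v : E | c ≤ v} = (fun v => v - c) ⁻¹' {v : E | 0 ≤ v} := by
      ext v; simp [sub_nonneg]
    rw [he]
    exact isClosed_nonneg.preimage (continuous_id.sub continuous_const)
  exact hclosed.mem_of_tendsto hf h

lemma carrier (hord : ∀ f g : StrongDual ℝ E, f ≤ g ↔ ∀ x : E, 0 ≤ x → f x ≤ g x)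
    (hoc : HasOrderContinuousNorm E)
    (g : ℕ → StrongDual ℝ E) (hg0 : ∀ n, 0 ≤ g n)
    (hdisj : ∀ i j, i ≠ j → g i ⊓ g j = 0) (x : E) (hx : 0 ≤ x) (m : ℕ)
    {ε : ℝ} (hε : 0 < ε) :
    ∃ t : E, 0 ≤ t ∧ t ≤ x ∧ (∀ i, i ≠ m → g i t = 0) ∧ g m x - ε ≤ g m t := by
  have step : ∀ (k : ℕ) (t' : E), 0 ≤ t' → ∃ y : E, 0 ≤ y ∧ y ≤ t' ∧
      (∑ i ∈ (Finset.range (k + 1)).erase m, g i) y < ε / 2 ^ (k + 1) ∧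
      g m (t' - y) < ε / 2 ^ (k + 1) := by
    intro k t' ht'
    have hpos : (0:ℝ) < ε / 2 ^ (k + 1) := by positivity
    have hdm : (∑ i ∈ (Finset.range (k + 1)).erase m, g i) ⊓ g m = 0 :=
      dual_sum_disj hord hg0 _ (Finset.notMem_erase m _)
        (fun i hi => hdisj i m (Finset.ne_of_mem_erase hi))
    obtain ⟨y, hy0, hyt, hlt⟩ :=
      lemA hord (dual_sum_nonneg hord hg0 _) (hg0 m) hdm ht' hpos
    have h1 : 0 ≤ (∑ i ∈ (Finset.range (k + 1)).erase m, g i) y :=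
      dual_nonneg_apply hord (dual_sum_nonneg hord hg0 _) hy0
    have h2 : 0 ≤ g m (t' - y) := dual_nonneg_apply hord (hg0 m) (sub_nonneg.2 hyt)
    exact ⟨y, hy0, hyt, by linarith, by linarith⟩
  choose Y hY0 hYle hYsum hYm using step
  set T : ℕ → {v : E // 0 ≤ v} :=
    fun k => Nat.rec ⟨x, hx⟩ (fun k' p => ⟨Y k' p.1 p.2, hY0 k' p.1 p.2⟩) k with hT
  set t : ℕ → E := fun k => (T k).1 with ht
  have ht0 : ∀ k, 0 ≤ t k := fun k => (T k).2
  have htx0 : t 0 = x := rfl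
  have htdec : ∀ k, t (k + 1) ≤ t k := fun k => hYle k (t k) (T k).2
  have htanti : Antitone t := antitone_nat_of_succ_le htdec
  have htlex : ∀ k, t k ≤ x := fun k => htx0 ▸ htanti (Nat.zero_le k)
  set s : ℕ → E := fun k => x - t k with hs
  have hsmono : Monotone s := fun a b hab => sub_le_sub_left (htanti hab) x
  have hsbd : ∀ k, s k ≤ x := fun k => sub_le_self x (ht0 k)
  have hcauchy : CauchySeq s := by
    rw [Metric.cauchySeq_iff]
    intro δ hδ
    obtain ⟨N, hN⟩ := small_jump hoc x s hsmono hsbd (half_pos hδ)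
    refine ⟨N, fun a ha b hb => ?_⟩
    have h1 := hN a ha
    have h2 := hN b hb
    rw [dist_eq_norm]
    calc ‖s a - s b‖ = ‖(s a - s N) - (s b - s N)‖ := by
          exact congrArg norm (by abel)
      _ ≤ ‖s a - s N‖ + ‖s b - s N‖ := norm_sub_le _ _
      _ < δ := by linarith
  obtain ⟨L, hL⟩ := cauchySeq_tendsto_of_complete hcauchy
  have htend : Filter.Tendsto t atTop (𝓝 (x - L)) := by
    have he : t = fun k => x - s k := funext fun k => (sub_sub_cancel x (t k)).symm
    rw [he]
    exact tendsto_const_nhds.sub hL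
  set tl : E := x - L with htl
  have htl_le : ∀ k, tl ≤ t k := fun k =>
    lim_le htend (Filter.eventually_atTop.2 ⟨k, fun j hj => htanti hj⟩)
  have htl0 : 0 ≤ tl := by
    have : ∀ᶠ k in atTop, 0 ≤ t k := Filter.Eventually.of_forall ht0
    exact le_lim htend this
  have htlx : tl ≤ x := le_trans (htl_le 0) (le_of_eq htx0)
  have hgeo0 : Filter.Tendsto (fun k : ℕ => ε / 2 ^ (k + 1)) atTop (𝓝 0) := by
    have h1 : Filter.Tendsto (fun k : ℕ => (1/2 : ℝ) ^ k) atTop (𝓝 0) :=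
      tendsto_pow_atTop_nhds_zero_of_lt_one (by norm_num) (by norm_num)
    have he : (fun k : ℕ => ε / 2 ^ (k + 1)) = fun k => (ε / 2) * (1/2 : ℝ) ^ k := by
      funext k
      rw [pow_succ]
      simp only [one_div, inv_pow]
      ring
    rw [he]
    simpa using h1.const_mul (ε / 2)
  refine ⟨tl, htl0, htlx, ?_, ?_⟩
  · intro i him
    have hnn : 0 ≤ g i tl := dual_nonneg_apply hord (hg0 i) htl0
    have hub : ∀ k, i ≤ k → g i tl ≤ ε / 2 ^ (k + 1) := by
      intro k hik
      have h1 : g i tl ≤ g i (t (k + 1)) := dual_mono_apply hord (hg0 i) (htl_le (k + 1))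
      have hmem : i ∈ (Finset.range (k + 1)).erase m :=
        Finset.mem_erase.2 ⟨him, Finset.mem_range.2 (Nat.lt_succ_of_le hik)⟩
      have h2 : g i (t (k + 1)) ≤
          (∑ j ∈ (Finset.range (k + 1)).erase m, g j) (t (k + 1)) := by
        rw [ContinuousLinearMap.sum_apply]
        exact Finset.single_le_sum
          (fun j _ => dual_nonneg_apply hord (hg0 j) (ht0 (k + 1))) hmem
      have h3 := hYsum k (t k) (T k).2
      have h4 : t (k + 1) = Y k (t k) (T k).2 := rfl
      rw [← h4] at h3
      linarith
    have hle0 : g i tl ≤ 0 := by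
      refine ge_of_tendsto hgeo0 ?_
      exact Filter.eventually_atTop.2 ⟨i, hub⟩
    linarith
  · have hstep : ∀ k, g m (t k) - ε / 2 ^ (k + 1) ≤ g m (t (k + 1)) := by
      intro k
      have h1 := hYm k (t k) (T k).2
      have h4 : t (k + 1) = Y k (t k) (T k).2 := rfl
      rw [← h4] at h1
      rw [map_sub] at h1
      linarith
    have hacc : ∀ k, g m x - (ε - ε / 2 ^ k) ≤ g m (t k) := by
      intro k
      induction k with
      | zero => simp [htx0]
      | succ k ih =>
        have h1 := hstep k
        have h2 : ε / 2 ^ k - ε / 2 ^ (k + 1) = ε / 2 ^ (k + 1) := by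
          have h2k : (2:ℝ) ^ k ≠ 0 := by positivity
          rw [pow_succ]
          field_simp
          ring
        linarith
    have hcont : Filter.Tendsto (fun k => g m (t k)) atTop (𝓝 (g m tl)) :=
      ((g m).continuous.tendsto tl).comp htend
    refine ge_of_tendsto hcont ?_
    refine Filter.Eventually.of_forall fun k => ?_
    have h1 := hacc k
    have h2 : 0 ≤ ε / 2 ^ k := by positivity
    linarith

end CarrierSec

end DWSN

variable {E : Type*} [NormedAddCommGroup E] [Lattice E] [IsOrderedAddMonoid E] [HasSolidNorm E] [NormedSpace ℝ E] [CompleteSpace E]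
  [Lattice (StrongDual ℝ E)]

/-- In an order continuous Banach lattice, every norm bounded pairwise disjoint
sequence in the dual is weak* null. -/
theorem disjoint_weakStar_null (hord : ∀ f g : StrongDual ℝ E, f ≤ g ↔ ∀ x : E, 0 ≤ x → f x ≤ g x) (hoc : HasOrderContinuousNorm E)
    (x' : ℕ → StrongDual ℝ E) (hb : ∃ C, ∀ n, ‖x' n‖ ≤ C)
    (hd : Pairwise fun m n => |x' m| ⊓ |x' n| = 0) : WeakStarNull E x' := by
  obtain ⟨C, hC⟩ := hb
  have hC0 : 0 ≤ C := le_trans (norm_nonneg _) (hC 0)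
  set g : ℕ → StrongDual ℝ E := fun n => |x' n| with hg
  have hg0 : ∀ n, 0 ≤ g n := fun n => DWSN.dual_abs_nonneg hord (x' n)
  have hg0pt : ∀ n (u : E), 0 ≤ u → 0 ≤ g n u := fun n u hu =>
    DWSN.dual_nonneg_apply hord (hg0 n) hu
  have hbound : ∀ n (v : E), |g n v| ≤ (2 * C + 1) * ‖v‖ := by
    intro n v
    have h1 := DWSN.dual_abs_apply_bound hord (x' n) v
    have h2 : 2 * ‖x' n‖ * ‖v‖ ≤ (2 * C + 1) * ‖v‖ := by
      have := hC n
      nlinarith [norm_nonneg v, norm_nonneg (x' n)]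
    exact le_trans h1 h2
  have key : ∀ x : E, 0 ≤ x → Tendsto (fun n => g n x) atTop (𝓝 0) := by
    intro x hx
    by_contra hnot
    have hfreqex : ∃ ε > 0, ∃ᶠ n in atTop, ε ≤ g n x := by
      rw [Metric.tendsto_atTop] at hnot
      push_neg at hnot
      obtain ⟨ε, hε, hfr⟩ := hnot
      refine ⟨ε, hε, Filter.frequently_atTop.2 fun N => ?_⟩
      obtain ⟨n, hn, hdist⟩ := hfr N
      refine ⟨n, hn, ?_⟩
      rw [Real.dist_eq, sub_zero, abs_of_nonneg (hg0pt n x hx)] at hdist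
      linarith
    obtain ⟨ε, hε, hfreq⟩ := hfreqex
    obtain ⟨φi, hφmono, hφ⟩ := extraction_of_frequently_atTop hfreq
    set G : ℕ → StrongDual ℝ E := fun j => g (φi j) with hG
    have hG0 : ∀ j, 0 ≤ G j := fun j => hg0 _
    have hGd : ∀ i j, i ≠ j → G i ⊓ G j = 0 := fun i j hij =>
      hd (fun h => hij (hφmono.injective h))
    have hpieces : ∀ j : ℕ, ∃ t : E, 0 ≤ t ∧ t ≤ x ∧ (∀ i, i ≠ j → G i t = 0) ∧
        G j x - ε / 2 ≤ G j t := fun j =>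
      DWSN.carrier hord hoc G hG0 hGd x hx j (half_pos hε)
    choose t ht0 htx htz htm using hpieces
    set s : ℕ → E := fun k => Nat.rec (t 0) (fun k' sk => sk ⊔ t (k' + 1)) k with hs
    have hssucc : ∀ k, s (k + 1) = s k ⊔ t (k + 1) := fun k => rfl
    have hsmono : Monotone s := monotone_nat_of_le_succ fun k => by
      rw [hssucc]; exact le_sup_left
    have hsx : ∀ k, s k ≤ x := by
      intro k
      induction k with
      | zero => exact htx 0
      | succ k ih => rw [hssucc]; exact sup_le ih (htx (k + 1))
    have hs_nonneg : ∀ k, 0 ≤ s k := fun k =>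
      le_trans (ht0 0) (hsmono (Nat.zero_le k))
    have hzero : ∀ k n, k < n → G n (s k) = 0 := by
      intro k
      induction k with
      | zero => exact fun n hn => htz 0 n (by omega)
      | succ k ih =>
        intro n hn
        have h1 : s (k + 1) ≤ s k + t (k + 1) := by
          rw [hssucc]
          exact sup_le (le_add_of_nonneg_right (ht0 _)) (le_add_of_nonneg_left (hs_nonneg _))
        have h2 : G n (s (k + 1)) ≤ G n (s k) + G n (t (k + 1)) := by
          have := DWSN.dual_mono_apply hord (hG0 n) h1
          rwa [map_add] at this
        have h3 := ih n (Nat.lt_of_succ_lt hn)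
        have h4 := htz (k + 1) n (by omega)
        have h5 : 0 ≤ G n (s (k + 1)) := DWSN.dual_nonneg_apply hord (hG0 n) (hs_nonneg (k+1))
        linarith
    have hjump : ∀ k, ε / 2 ≤ G (k + 1) (s (k + 1) - s k) := by
      intro k
      have h1 : G (k + 1) (t (k + 1)) ≤ G (k + 1) (s (k + 1)) :=
        DWSN.dual_mono_apply hord (hG0 _) (by rw [hssucc]; exact le_sup_right)
      have h2 := htm (k + 1)
      have h3 : ε ≤ G (k + 1) x := hφ (k + 1)
      have h4 := hzero k (k + 1) (Nat.lt_succ_self k)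
      rw [map_sub]
      linarith
    have hδpos : 0 < ε / 2 / (2 * C + 1) := by positivity
    obtain ⟨N, hN⟩ := DWSN.small_jump hoc x s hsmono hsx hδpos
    have h5 := hN (N + 1) (Nat.le_succ N)
    have h6 := hjump N
    have h7 := hbound (φi (N + 1)) (s (N + 1) - s N)
    have h8 : G (N + 1) (s (N + 1) - s N) ≤ |G (N + 1) (s (N + 1) - s N)| := le_abs_self _
    have h9 : (2 * C + 1) * ‖s (N + 1) - s N‖ < (2 * C + 1) * (ε / 2 / (2 * C + 1)) := by
      have hpos : (0:ℝ) < 2 * C + 1 := by linarith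
      exact mul_lt_mul_of_pos_left h5 hpos
    have h10 : (2 * C + 1) * (ε / 2 / (2 * C + 1)) = ε / 2 := by
      have hpos : (2 * C + 1) ≠ 0 := by positivity
      field_simp
    rw [h10] at h9
    linarith
  intro v
  have h1 : Tendsto (fun n => g n |v|) atTop (𝓝 0) := key |v| (abs_nonneg v)
  refine squeeze_zero_norm (fun n => ?_) h1
  have hv1 : x' n v⁺ ≤ g n v⁺ := (DWSN.dual_abs_le hord (posPart_nonneg v)).1
  have hv2 : -(x' n v⁺) ≤ g n v⁺ := (DWSN.dual_abs_le hord (posPart_nonneg v)).2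
  have hv3 : x' n v⁻ ≤ g n v⁻ := (DWSN.dual_abs_le hord (negPart_nonneg v)).1
  have hv4 : -(x' n v⁻) ≤ g n v⁻ := (DWSN.dual_abs_le hord (negPart_nonneg v)).2
  have he : x' n v = x' n v⁺ - x' n v⁻ := by rw [← map_sub, posPart_sub_negPart]
  have he2 : g n v⁺ + g n v⁻ = g n |v| := by rw [← map_add, posPart_add_negPart]
  rw [Real.norm_eq_abs, he, abs_le]
  constructor <;> [skip; skip] <;> linarith
end
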